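/- arXiv:1602.08907 — 2 statements merged into one kernel-verified Lean document; each statement's English description precedes it below -/
import Mathlib

section
/- Let G be a connected simple graph of order n ≥ 9. Then β_p(G) = n−1 if and only if either (i) τ(G) = n−1, or (ii) τ(G) = n−2 and some twin class W of cardinality n−2 induces a complete subgraph of G. -/
open Classical SimpleGraph

set_option linter.unusedSectionVars false

noncomputable section

/-- The distance from a vertex to a set of vertices. -/
def setDist {V : Type*} (G : SimpleGraph V) (u : V) (S : Set V) : ℕ :=
  sInf ((G.dist u) '' S)

/-- A locating partition of a graph: a partition of the vertex set such that every
vertex is uniquely determined by its vector of distances to the parts. -/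
def IsLocatingPartition {V : Type*} (G : SimpleGraph V) (P : Set (Set V)) : Prop :=
  Setoid.IsPartition P ∧
    ∀ u v : V, (∀ S ∈ P, setDist G u S = setDist G v S) → u = v

/-- The partition dimension: the minimum cardinality of a locating partition. -/
def partitionDim {V : Type*} (G : SimpleGraph V) : ℕ :=
  sInf {k | ∃ P : Set (Set V), IsLocatingPartition G P ∧ P.ncard = k}

/-- Two vertices are twins if they have the same neighbors other than themselves. -/
def IsTwin {V : Type*} (G : SimpleGraph V) (u v : V) : Prop :=
  G.neighborSet u \ {v} = G.neighborSet v \ {u}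

/-- The twin class of a vertex. -/
def twinClass {V : Type*} (G : SimpleGraph V) (u : V) : Set V :=
  {v | IsTwin G u v}

/-- The twin number: the maximum cardinality of a twin class. -/
def twinNumber {V : Type*} (G : SimpleGraph V) : ℕ :=
  sSup {k | ∃ u : V, (twinClass G u).ncard = k}

section Basics
variable {V : Type*} {G : SimpleGraph V}

lemma setDist_le {u w : V} {S : Set V} (hw : w ∈ S) : setDist G u S ≤ G.dist u w :=
  Nat.sInf_le ⟨w, hw, rfl⟩

lemma setDist_exists (u : V) {S : Set V} (hS : S.Nonempty) :
    ∃ w ∈ S, setDist G u S = G.dist u w := by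
  obtain ⟨w, hw, he⟩ := Nat.sInf_mem (hS.image (G.dist u))
  exact ⟨w, hw, he.symm⟩

lemma setDist_singleton (u x : V) : setDist G u {x} = G.dist u x := by
  simp [setDist]

lemma setDist_eq_zero_of_mem {u : V} {S : Set V} (h : u ∈ S) : setDist G u S = 0 :=
  Nat.le_zero.mp (by simpa [SimpleGraph.dist_self] using setDist_le (G := G) (u := u) h)

lemma setDist_ne_zero (hG : G.Connected) {u : V} {S : Set V} (hS : S.Nonempty)
    (h : u ∉ S) : setDist G u S ≠ 0 := by
  intro h0
  obtain ⟨w, hw, he⟩ := setDist_exists (G := G) u hS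
  rw [h0] at he
  exact h ((hG.dist_eq_zero_iff.mp he.symm) ▸ hw)

lemma setDist_union {u : V} {A B : Set V} (hA : A.Nonempty) (hB : B.Nonempty) :
    setDist G u (A ∪ B) = min (setDist G u A) (setDist G u B) := by
  apply le_antisymm
  · rcases le_total (setDist G u A) (setDist G u B) with h | h
    · rw [min_eq_left h]
      obtain ⟨w, hw, he⟩ := setDist_exists (G := G) u hA
      rw [he]; exact setDist_le (Set.mem_union_left _ hw)
    · rw [min_eq_right h]
      obtain ⟨w, hw, he⟩ := setDist_exists (G := G) u hB
      rw [he]; exact setDist_le (Set.mem_union_right _ hw)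
  · obtain ⟨w, hw, he⟩ := setDist_exists (G := G) u (hA.mono Set.subset_union_left)
    rw [he]
    rcases hw with hw | hw
    · exact le_trans (min_le_left _ _) (setDist_le hw)
    · exact le_trans (min_le_right _ _) (setDist_le hw)

/-- adjacency transfers along twins -/
lemma IsTwin.adj_iff {a b x : V} (h : IsTwin G a b) (hxa : x ≠ a) (hxb : x ≠ b) :
    G.Adj a x ↔ G.Adj b x := by
  constructor
  · intro hax
    have : x ∈ G.neighborSet a \ {b} := ⟨hax, hxb⟩
    rw [h] at this
    exact this.1
  · intro hbx
    have : x ∈ G.neighborSet b \ {a} := ⟨hbx, hxa⟩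
    rw [← h] at this
    exact this.1

@[refl] lemma IsTwin.refl (a : V) : IsTwin G a a := rfl

lemma IsTwin.symm {a b : V} (h : IsTwin G a b) : IsTwin G b a := Eq.symm h

lemma isTwin_comm {a b : V} : IsTwin G a b ↔ IsTwin G b a := ⟨IsTwin.symm, IsTwin.symm⟩

private lemma twin_subset {a b c : V} (hab : IsTwin G a b) (hbc : IsTwin G b c)
    (hac : a ≠ c) : G.neighborSet a \ {c} ⊆ G.neighborSet c \ {a} := by
  intro x hx
  obtain ⟨hxa, hxc⟩ := hx
  have hxc' : x ≠ c := hxc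
  have hxna : x ≠ a := (G.ne_of_adj hxa).symm
  by_cases hxb : x = b
  · have hab' : IsTwin G a x := by rw [hxb]; exact hab
    have hbc' : IsTwin G x c := by rw [hxb]; exact hbc
    have h2 : G.Adj c a := (hbc'.adj_iff hxna.symm hac).mp hxa.symm
    have h4 : G.Adj x c := (hab'.adj_iff (Ne.symm hac) (Ne.symm hxc')).mp h2.symm
    exact ⟨h4.symm, hxna⟩
  · have h1 : G.Adj b x := (hab.adj_iff hxna hxb).mp hxa
    have h2 : G.Adj c x := (hbc.adj_iff hxb hxc').mp h1
    exact ⟨h2, hxna⟩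

lemma IsTwin.trans {a b c : V} (hab : IsTwin G a b) (hbc : IsTwin G b c) :
    IsTwin G a c := by
  by_cases hac : a = c
  · subst hac; rfl
  · exact le_antisymm (twin_subset hab hbc hac)
      (twin_subset hbc.symm hab.symm (Ne.symm hac))

end Basics
section Dist
variable {V : Type*} {G : SimpleGraph V}

/-- every vertex of a connected graph on ≥ 2 vertices has a neighbor -/
lemma exists_adj (hG : G.Connected) {v w0 : V} (hw0 : w0 ≠ v) : ∃ w, G.Adj v w := by
  obtain ⟨p⟩ := hG.preconnected v w0
  cases p with
  | nil => exact absurd rfl hw0.symm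
  | cons h q => exact ⟨_, h⟩

lemma closed_not_reachable {K : Set V} (hcl : ∀ x ∈ K, ∀ y, G.Adj x y → y ∈ K)
    {x y : V} (hx : x ∈ K) (hy : y ∉ K) : ¬G.Reachable x y := by
  intro ⟨p⟩
  induction p with
  | nil => exact hy hx
  | @cons a b c h q ih => exact ih (hcl _ hx _ h) hy

/-- distance from a twin pair to outside vertices is equal -/
lemma IsTwin.dist_eq (hG : G.Connected) {a b x : V} (h : IsTwin G a b)
    (hxa : x ≠ a) (hxb : x ≠ b) : G.dist a x = G.dist b x := by
  have key : ∀ (a b : V), IsTwin G a b → x ≠ a → x ≠ b → G.dist b x ≤ G.dist a x := by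
    intro a b h hxa hxb
    obtain ⟨p, hp⟩ := hG.exists_walk_length_eq_dist a x
    cases p with
    | nil => exact absurd rfl hxa.symm
    | @cons _ v _ hadj q =>
      by_cases hvb : v = b
      · calc G.dist b x ≤ q.length := by rw [← hvb]; exact SimpleGraph.dist_le q
        _ ≤ G.dist a x := by rw [← hp]; simp
      · have hva : v ≠ a := (G.ne_of_adj hadj).symm
        have hbv : G.Adj b v := (h.adj_iff hva hvb).mp hadj
        calc G.dist b x ≤ G.dist b v + G.dist v x := hG.dist_triangle
        _ ≤ 1 + q.length := by
            gcongr
            · exact le_of_eq (SimpleGraph.dist_eq_one_iff_adj.mpr hbv)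
            · exact SimpleGraph.dist_le q
        _ = G.dist a x := by rw [← hp]; simp [Nat.add_comm]
  exact le_antisymm (key b a h.symm hxb hxa) (key a b h hxa hxb)

lemma isTwin_iff_dist (hG : G.Connected) {a b : V} :
    IsTwin G a b ↔ ∀ x, x ≠ a → x ≠ b → G.dist a x = G.dist b x := by
  constructor
  · intro h x hxa hxb
    exact h.dist_eq hG hxa hxb
  · intro h
    unfold IsTwin
    ext x
    simp only [Set.mem_diff, SimpleGraph.mem_neighborSet, Set.mem_singleton_iff]
    constructor
    · rintro ⟨hadj, hxb⟩
      have hxa : x ≠ a := (G.ne_of_adj hadj).symm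
      have d1 : G.dist a x = 1 := SimpleGraph.dist_eq_one_iff_adj.mpr hadj
      have d2 : G.dist b x = 1 := by rw [← h x hxa hxb]; exact d1
      exact ⟨SimpleGraph.dist_eq_one_iff_adj.mp d2, hxa⟩
    · rintro ⟨hadj, hxa⟩
      have hxb : x ≠ b := (G.ne_of_adj hadj).symm
      have d1 : G.dist b x = 1 := SimpleGraph.dist_eq_one_iff_adj.mpr hadj
      have d2 : G.dist a x = 1 := by rw [h x hxa hxb]; exact d1
      exact ⟨SimpleGraph.dist_eq_one_iff_adj.mp d2, hxb⟩

/-- a witness distinguishing a non-twin pair -/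
lemma exists_witness (hG : G.Connected) {a b : V} (h : ¬IsTwin G a b) :
    ∃ x, x ≠ a ∧ x ≠ b ∧ G.dist a x ≠ G.dist b x := by
  rw [isTwin_iff_dist hG] at h
  push_neg at h
  obtain ⟨x, h1, h2, h3⟩ := h
  exact ⟨x, h1, h2, h3⟩

/-- the distance between distinct twins is 1 or 2 -/
lemma twin_dist (hG : G.Connected) {a b : V} (h : IsTwin G a b) (hne : a ≠ b) :
    G.dist a b = 1 ∨ G.dist a b = 2 := by
  by_cases hadj : G.Adj a b
  · exact Or.inl (SimpleGraph.dist_eq_one_iff_adj.mpr hadj)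
  · right
    obtain ⟨w, hw⟩ := exists_adj hG hne.symm
    have hwb : w ≠ b := by rintro rfl; exact hadj hw
    have hbw : G.Adj b w := (h.adj_iff (G.ne_of_adj hw).symm hwb).mp hw
    have hle : G.dist a b ≤ 2 := by
      calc G.dist a b ≤ G.dist a w + G.dist w b := hG.dist_triangle
      _ ≤ 1 + 1 := by
          gcongr
          · exact le_of_eq (SimpleGraph.dist_eq_one_iff_adj.mpr hw)
          · exact le_of_eq (SimpleGraph.dist_eq_one_iff_adj.mpr hbw.symm)
      _ = 2 := rfl
    have h0 : G.dist a b ≠ 0 := fun hh => hne (hG.dist_eq_zero_iff.mp hh)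
    have h1 : G.dist a b ≠ 1 := fun hh => hadj (SimpleGraph.dist_eq_one_iff_adj.mp hh)
    omega

end Dist
section Partition
variable {V : Type*} [Fintype V] {G : SimpleGraph V}

lemma part_nonempty {P : Set (Set V)} (hP : Setoid.IsPartition P) {S : Set V}
    (hS : S ∈ P) : S.Nonempty :=
  Set.nonempty_iff_ne_empty.mpr (fun h => hP.1 (h ▸ hS))

def partOf {P : Set (Set V)} (hP : Setoid.IsPartition P) (v : V) : Set V :=
  (hP.2 v).exists.choose

lemma partOf_mem {P : Set (Set V)} (hP : Setoid.IsPartition P) (v : V) :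
    partOf hP v ∈ P := (hP.2 v).exists.choose_spec.1

lemma mem_partOf {P : Set (Set V)} (hP : Setoid.IsPartition P) (v : V) :
    v ∈ partOf hP v := (hP.2 v).exists.choose_spec.2

lemma partOf_eq {P : Set (Set V)} (hP : Setoid.IsPartition P) {v : V} {T : Set V}
    (hT : T ∈ P) (hv : v ∈ T) : partOf hP v = T :=
  ExistsUnique.unique (hP.2 v) ⟨partOf_mem hP v, mem_partOf hP v⟩ ⟨hT, hv⟩

lemma part_eq_of_mem {P : Set (Set V)} (hP : Setoid.IsPartition P) {v : V} {S T : Set V}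
    (hS : S ∈ P) (hT : T ∈ P) (hvS : v ∈ S) (hvT : v ∈ T) : S = T :=
  (partOf_eq hP hS hvS).symm.trans (partOf_eq hP hT hvT)

lemma isLocating_of (hG : G.Connected) {P : Set (Set V)} (hP : Setoid.IsPartition P)
    (h : ∀ S ∈ P, ∀ u ∈ S, ∀ v ∈ S, u ≠ v → ∃ T ∈ P, setDist G u T ≠ setDist G v T) :
    IsLocatingPartition G P := by
  refine ⟨hP, fun u v huv => ?_⟩
  by_contra hne
  obtain ⟨S, hS, hu⟩ := (hP.2 u).exists
  by_cases hv : v ∈ S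
  · obtain ⟨T, hT, hTd⟩ := h S hS u hu v hv hne
    exact hTd (huv T hT)
  · have h1 : setDist G u S = 0 := setDist_eq_zero_of_mem hu
    have h2 : setDist G v S ≠ 0 := setDist_ne_zero hG (part_nonempty hP hS) hv
    exact h2 (by rw [← huv S hS]; exact h1)

def sings (A : Set V) : Set (Set V) := (fun x => ({x} : Set V)) '' A

lemma sings_mem {A T : Set V} : T ∈ sings A ↔ ∃ x ∈ A, T = {x} := by
  constructor
  · rintro ⟨x, hx, rfl⟩; exact ⟨x, hx, rfl⟩
  · rintro ⟨x, hx, rfl⟩; exact ⟨x, hx, rfl⟩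

lemma sings_ncard {A : Set V} : (sings A).ncard = A.ncard :=
  Set.ncard_image_of_injective _ Set.singleton_injective

lemma part1_isPartition {A : Set V} (hA : A.Nonempty) :
    Setoid.IsPartition (insert A (sings Aᶜ)) := by
  constructor
  · intro h
    rcases Set.mem_insert_iff.mp h with h | h
    · exact hA.ne_empty h.symm
    · obtain ⟨x, _, hx⟩ := sings_mem.mp h
      exact (Set.singleton_ne_empty x) hx.symm
  · intro v
    by_cases hv : v ∈ A
    · refine ⟨A, ⟨Set.mem_insert _ _, hv⟩, ?_⟩
      rintro T ⟨hT, hvT⟩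
      rcases Set.mem_insert_iff.mp hT with rfl | hT
      · rfl
      · obtain ⟨x, hx, rfl⟩ := sings_mem.mp hT
        exact absurd (Set.mem_singleton_iff.mp hvT ▸ hv) hx
    · refine ⟨{v}, ⟨Set.mem_insert_iff.mpr (Or.inr (sings_mem.mpr ⟨v, hv, rfl⟩)), rfl⟩, ?_⟩
      rintro T ⟨hT, hvT⟩
      rcases Set.mem_insert_iff.mp hT with rfl | hT
      · exact absurd hvT hv
      · obtain ⟨x, hx, rfl⟩ := sings_mem.mp hT
        rw [Set.mem_singleton_iff.mp hvT]

lemma part1_ncard {A : Set V} (hA : A.Nonempty) :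
    (insert A (sings Aᶜ)).ncard = Aᶜ.ncard + 1 := by
  rw [Set.ncard_insert_of_notMem, sings_ncard]
  intro h
  obtain ⟨x, hx, he⟩ := sings_mem.mp h
  obtain ⟨a, ha⟩ := hA
  have hax : a = x := by have h2 := ha; rw [he] at h2; exact h2
  exact hx (hax ▸ ha)

lemma part1_locating (hG : G.Connected) {A : Set V} (hA : A.Nonempty)
    (h : ∀ u ∈ A, ∀ v ∈ A, u ≠ v → ∃ x ∈ Aᶜ, G.dist u x ≠ G.dist v x) :
    IsLocatingPartition G (insert A (sings Aᶜ)) := by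
  apply isLocating_of hG (part1_isPartition hA)
  intro S hS u hu v hv huv
  rcases Set.mem_insert_iff.mp hS with rfl | hS
  · obtain ⟨x, hx, hd⟩ := h u hu v hv huv
    refine ⟨{x}, Set.mem_insert_iff.mpr (Or.inr (sings_mem.mpr ⟨x, hx, rfl⟩)), ?_⟩
    rw [setDist_singleton, setDist_singleton]; exact hd
  · obtain ⟨x, hx, rfl⟩ := sings_mem.mp hS
    exact absurd ((Set.mem_singleton_iff.mp hu).trans (Set.mem_singleton_iff.mp hv).symm) huv

lemma part2_isPartition {A B : Set V} (hA : A.Nonempty) (hB : B.Nonempty)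
    (hAB : Disjoint A B) :
    Setoid.IsPartition (insert A (insert B (sings (A ∪ B)ᶜ))) := by
  constructor
  · intro h
    rcases Set.mem_insert_iff.mp h with h | h
    · exact hA.ne_empty h.symm
    rcases Set.mem_insert_iff.mp h with h | h
    · exact hB.ne_empty h.symm
    · obtain ⟨x, _, hx⟩ := sings_mem.mp h
      exact (Set.singleton_ne_empty x) hx.symm
  · intro v
    by_cases hvA : v ∈ A
    · refine ⟨A, ⟨Set.mem_insert _ _, hvA⟩, ?_⟩
      rintro T ⟨hT, hvT⟩
      rcases Set.mem_insert_iff.mp hT with rfl | hT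
      · rfl
      rcases Set.mem_insert_iff.mp hT with rfl | hT
      · exact absurd rfl (hAB.ne_of_mem hvA hvT)
      · obtain ⟨x, hx, rfl⟩ := sings_mem.mp hT
        exact absurd (Set.mem_union_left _ (Set.mem_singleton_iff.mp hvT ▸ hvA)) hx
    by_cases hvB : v ∈ B
    · refine ⟨B, ⟨Set.mem_insert_iff.mpr (Or.inr (Set.mem_insert _ _)), hvB⟩, ?_⟩
      rintro T ⟨hT, hvT⟩
      rcases Set.mem_insert_iff.mp hT with rfl | hT
      · exact absurd hvT hvA
      rcases Set.mem_insert_iff.mp hT with rfl | hT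
      · rfl
      · obtain ⟨x, hx, rfl⟩ := sings_mem.mp hT
        exact absurd (Set.mem_union_right _ (Set.mem_singleton_iff.mp hvT ▸ hvB)) hx
    · have hvc : v ∈ (A ∪ B)ᶜ := by
        intro h; rcases h with h | h; exact hvA h; exact hvB h
      refine ⟨{v}, ⟨Set.mem_insert_iff.mpr (Or.inr (Set.mem_insert_iff.mpr
        (Or.inr (sings_mem.mpr ⟨v, hvc, rfl⟩)))), rfl⟩, ?_⟩
      rintro T ⟨hT, hvT⟩
      rcases Set.mem_insert_iff.mp hT with rfl | hT
      · exact absurd hvT hvA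
      rcases Set.mem_insert_iff.mp hT with rfl | hT
      · exact absurd hvT hvB
      · obtain ⟨x, hx, rfl⟩ := sings_mem.mp hT
        rw [Set.mem_singleton_iff.mp hvT]

lemma part2_ncard {A B : Set V} (hA : A.Nonempty) (hB : B.Nonempty)
    (hAB : Disjoint A B) :
    (insert A (insert B (sings (A ∪ B)ᶜ))).ncard = (A ∪ B)ᶜ.ncard + 2 := by
  have hBs : B ∉ sings (A ∪ B)ᶜ := by
    intro h
    obtain ⟨x, hx, he⟩ := sings_mem.mp h
    obtain ⟨b, hb⟩ := hB
    have hbx : b = x := by have h2 := hb; rw [he] at h2; exact h2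
    exact hx (Set.mem_union_right _ (hbx ▸ hb))
  have hAs : A ∉ insert B (sings (A ∪ B)ᶜ) := by
    intro h
    rcases Set.mem_insert_iff.mp h with h | h
    · obtain ⟨a, ha⟩ := hA
      exact hAB.ne_of_mem ha (h ▸ ha) rfl
    · obtain ⟨x, hx, he⟩ := sings_mem.mp h
      obtain ⟨a, ha⟩ := hA
      have hax : a = x := by have h2 := ha; rw [he] at h2; exact h2
      exact hx (Set.mem_union_left _ (hax ▸ ha))
  rw [Set.ncard_insert_of_notMem hAs, Set.ncard_insert_of_notMem hBs, sings_ncard]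

lemma part2_locating (hG : G.Connected) {A B : Set V} (hA : A.Nonempty) (hB : B.Nonempty)
    (hAB : Disjoint A B)
    (h1 : ∀ u ∈ A, ∀ v ∈ A, u ≠ v → ∃ x ∈ (A ∪ B)ᶜ, G.dist u x ≠ G.dist v x)
    (h2 : ∀ u ∈ B, ∀ v ∈ B, u ≠ v → ∃ x ∈ (A ∪ B)ᶜ, G.dist u x ≠ G.dist v x) :
    IsLocatingPartition G (insert A (insert B (sings (A ∪ B)ᶜ))) := by
  apply isLocating_of hG (part2_isPartition hA hB hAB)
  intro S hS u hu v hv huv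
  have singcase : ∀ x ∈ (A ∪ B)ᶜ, G.dist u x ≠ G.dist v x →
      ∃ T ∈ insert A (insert B (sings (A ∪ B)ᶜ)), setDist G u T ≠ setDist G v T := by
    intro x hx hd
    refine ⟨{x}, Set.mem_insert_iff.mpr (Or.inr (Set.mem_insert_iff.mpr
      (Or.inr (sings_mem.mpr ⟨x, hx, rfl⟩)))), ?_⟩
    rw [setDist_singleton, setDist_singleton]; exact hd
  rcases Set.mem_insert_iff.mp hS with rfl | hS
  · obtain ⟨x, hx, hd⟩ := h1 u hu v hv huv
    exact singcase x hx hd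
  rcases Set.mem_insert_iff.mp hS with rfl | hS
  · obtain ⟨x, hx, hd⟩ := h2 u hu v hv huv
    exact singcase x hx hd
  · obtain ⟨x, hx, rfl⟩ := sings_mem.mp hS
    exact absurd ((Set.mem_singleton_iff.mp hu).trans (Set.mem_singleton_iff.mp hv).symm) huv

end Partition
section LocSet
variable {V : Type*} [Fintype V] {G : SimpleGraph V}

def locSet (G : SimpleGraph V) : Set ℕ :=
  {k | ∃ P : Set (Set V), IsLocatingPartition G P ∧ P.ncard = k}

lemma partitionDim_eq : partitionDim G = sInf (locSet G) := rfl

lemma ncard_compl_eq (A : Set V) : Aᶜ.ncard = Fintype.card V - A.ncard := by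
  have h := Set.ncard_add_ncard_compl A
  rw [Nat.card_eq_fintype_card] at h
  omega

/-- the all-singletons partition is locating -/
lemma card_mem_locSet (hG : G.Connected) [Nonempty V] :
    Fintype.card V ∈ locSet G := by
  obtain ⟨v0⟩ := ‹Nonempty V›
  have hA : ({v0} : Set V).Nonempty := ⟨v0, rfl⟩
  refine ⟨insert {v0} (sings ({v0} : Set V)ᶜ), part1_locating hG hA ?_, ?_⟩
  · intro u hu v hv huv
    exact absurd ((Set.mem_singleton_iff.mp hu).trans (Set.mem_singleton_iff.mp hv).symm) huv
  · rw [part1_ncard hA, ncard_compl_eq, Set.ncard_singleton]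
    have : 1 ≤ Fintype.card V := Fintype.card_pos
    omega

/-- twins in the same part of a locating partition must be equal -/
lemma twin_same_part {P : Set (Set V)} (hG : G.Connected)
    (hL : IsLocatingPartition G P) {a b : V} (ht : IsTwin G a b) {S : Set V}
    (hS : S ∈ P) (ha : a ∈ S) (hb : b ∈ S) : a = b := by
  apply hL.2
  intro T hT
  by_cases hTS : T = S
  · subst hTS
    rw [setDist_eq_zero_of_mem ha, setDist_eq_zero_of_mem hb]
  · have haT : a ∉ T := fun h => hTS (part_eq_of_mem hL.1 hT hS h ha)
    have hbT : b ∉ T := fun h => hTS (part_eq_of_mem hL.1 hT hS h hb)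
    unfold setDist
    congr 1
    apply Set.image_congr
    intro x hx
    exact ht.dist_eq hG (fun he => haT (he ▸ hx)) (fun he => hbT (he ▸ hx))

/-- partOf is injective on a set of pairwise distinct twins in a locating partition -/
lemma partOf_injOn_twins {P : Set (Set V)} (hG : G.Connected)
    (hL : IsLocatingPartition G P) {W : Set V}
    (hW : ∀ a ∈ W, ∀ b ∈ W, IsTwin G a b) :
    Set.InjOn (partOf hL.1) W := by
  intro a ha b hb he
  exact twin_same_part hG hL (hW a ha b hb) (partOf_mem hL.1 a)
    (mem_partOf hL.1 a) (he ▸ mem_partOf hL.1 b)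

lemma exists_nonsingleton_part {P : Set (Set V)} (hP : Setoid.IsPartition P)
    (hcard : P.ncard < Fintype.card V) :
    ∃ S ∈ P, ∃ x ∈ S, ∃ y ∈ S, x ≠ y := by
  by_contra h
  push_neg at h
  have hinj : Function.Injective (partOf hP) := by
    intro x y he
    exact h _ (partOf_mem hP x) x (mem_partOf hP x) y (he ▸ mem_partOf hP y)
  have hrc : (Set.range (partOf hP)).ncard = Fintype.card V := by
    rw [← Set.image_univ, Set.ncard_image_of_injOn hinj.injOn, Set.ncard_univ,
      Nat.card_eq_fintype_card]
  have hPeq : P = Set.range (partOf hP) := by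
    apply Set.Subset.antisymm
    · intro S hS
      obtain ⟨x, hx⟩ := part_nonempty hP hS
      exact ⟨x, partOf_eq hP hS hx⟩
    · rintro S ⟨v, rfl⟩
      exact partOf_mem hP v
  rw [hPeq, hrc] at hcard
  omega

/-- splitting a non-singleton part increases the partition size by one -/
lemma locSet_succ (hG : G.Connected) {k : ℕ} (hk : k ∈ locSet G)
    (hkn : k < Fintype.card V) : k + 1 ∈ locSet G := by
  obtain ⟨P, hL, hcard⟩ := hk
  obtain ⟨S, hS, x, hx, y, hy, hxy⟩ := exists_nonsingleton_part hL.1 (hcard ▸ hkn)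
  set P' : Set (Set V) := insert {x} (insert (S \ {x}) (P \ {S})) with hP'
  have hSx_ne : (S \ {x}).Nonempty := ⟨y, hy, hxy.symm⟩
  have hxS : ({x} : Set V) ∉ insert (S \ {x}) (P \ {S}) := by
    intro h
    rcases Set.mem_insert_iff.mp h with h | h
    · have : x ∈ S \ {x} := by rw [← h]; rfl
      exact this.2 rfl
    · have hxP : ({x} : Set V) ∈ P := h.1
      have : ({x} : Set V) = S := part_eq_of_mem hL.1 hxP hS rfl hx
      exact h.2 this
  have hSxP : (S \ {x}) ∉ P \ {S} := by
    intro h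
    have : S \ {x} = S := part_eq_of_mem hL.1 h.1 hS ⟨hy, hxy.symm⟩ hy
    have : x ∈ S \ {x} := this.symm ▸ hx
    exact this.2 rfl
  have hpart : Setoid.IsPartition P' := by
    constructor
    · intro h
      rcases Set.mem_insert_iff.mp h with h | h
      · exact (Set.singleton_ne_empty x) h.symm
      rcases Set.mem_insert_iff.mp h with h | h
      · exact hSx_ne.ne_empty h.symm
      · exact hL.1.1 h.1
    · intro v
      by_cases hvx : v = x
      · subst hvx
        refine ⟨{v}, ⟨Set.mem_insert _ _, rfl⟩, ?_⟩
        rintro T ⟨hT, hvT⟩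
        rcases Set.mem_insert_iff.mp hT with rfl | hT
        · rfl
        rcases Set.mem_insert_iff.mp hT with rfl | hT
        · exact absurd rfl hvT.2
        · exact absurd (part_eq_of_mem hL.1 hT.1 hS hvT hx) hT.2
      by_cases hvS : v ∈ S
      · refine ⟨S \ {x}, ⟨Set.mem_insert_iff.mpr (Or.inr (Set.mem_insert _ _)), hvS, hvx⟩, ?_⟩
        rintro T ⟨hT, hvT⟩
        rcases Set.mem_insert_iff.mp hT with rfl | hT
        · exact absurd hvT hvx
        rcases Set.mem_insert_iff.mp hT with rfl | hT
        · rfl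
        · exact absurd (part_eq_of_mem hL.1 hT.1 hS hvT hvS) hT.2
      · obtain ⟨T0, hT0, hvT0⟩ := (hL.1.2 v).exists
        have hT0S : T0 ≠ S := fun h => hvS (h ▸ hvT0)
        refine ⟨T0, ⟨Set.mem_insert_iff.mpr (Or.inr (Set.mem_insert_iff.mpr
          (Or.inr ⟨hT0, hT0S⟩))), hvT0⟩, ?_⟩
        rintro T ⟨hT, hvT⟩
        rcases Set.mem_insert_iff.mp hT with rfl | hT
        · exact absurd hvT hvx
        rcases Set.mem_insert_iff.mp hT with rfl | hT
        · exact absurd hvT.1 hvS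
        · exact part_eq_of_mem hL.1 hT.1 hT0 hvT hvT0
  refine ⟨P', ⟨hpart, ?_⟩, ?_⟩
  · -- locating
    intro u v huv
    apply hL.2
    intro T hT
    by_cases hTS : T = S
    · subst hTS
      have hTu : T = ({x} : Set V) ∪ (T \ {x}) := by
        rw [Set.union_diff_cancel]
        simpa using hx
      have e1 : setDist G u T = min (setDist G u ({x} : Set V)) (setDist G u (T \ {x})) := by
        conv_lhs => rw [hTu]
        exact setDist_union ⟨x, rfl⟩ hSx_ne
      have e2 : setDist G v T = min (setDist G v ({x} : Set V)) (setDist G v (T \ {x})) := by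
        conv_lhs => rw [hTu]
        exact setDist_union ⟨x, rfl⟩ hSx_ne
      rw [e1, e2, huv {x} (Set.mem_insert _ _),
        huv (T \ {x}) (Set.mem_insert_iff.mpr (Or.inr (Set.mem_insert _ _)))]
    · exact huv T (Set.mem_insert_iff.mpr (Or.inr (Set.mem_insert_iff.mpr
        (Or.inr ⟨hT, hTS⟩))))
  · have hPpos : 0 < P.ncard := (Set.ncard_pos (Set.toFinite P)).mpr ⟨S, hS⟩
    rw [hP', Set.ncard_insert_of_notMem hxS, Set.ncard_insert_of_notMem hSxP,
      Set.ncard_diff_singleton_of_mem hS]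
    omega

/-- the key reduction: partitionDim = n-1 iff n-1 is achievable and n-2 is not -/
lemma key_iff (hG : G.Connected) [Nonempty V] {n : ℕ} (hn : Fintype.card V = n)
    (h9 : 9 ≤ n) :
    partitionDim G = n - 1 ↔ (n - 1 ∈ locSet G ∧ n - 2 ∉ locSet G) := by
  have hne : (locSet G).Nonempty := ⟨_, card_mem_locSet hG⟩
  have hup : ∀ j ∈ locSet G, ∀ m, j ≤ m → m ≤ n → m ∈ locSet G := by
    intro j hj m hjm hmn
    induction m, hjm using Nat.le_induction with
    | base => exact hj
    | succ m hm ih =>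
      have h1 : m ∈ locSet G := ih (by omega)
      exact locSet_succ hG h1 (by omega)
  constructor
  · intro h
    constructor
    · rw [partitionDim_eq] at h
      exact h ▸ Nat.sInf_mem hne
    · intro hmem
      have : sInf (locSet G) ≤ n - 2 := Nat.sInf_le hmem
      rw [partitionDim_eq] at h
      omega
  · rintro ⟨h1, h2⟩
    rw [partitionDim_eq]
    have hle : sInf (locSet G) ≤ n - 1 := Nat.sInf_le h1
    rcases Nat.lt_or_ge (sInf (locSet G)) (n - 1) with hlt | hge
    · exfalso
      have hmem : sInf (locSet G) ∈ locSet G := Nat.sInf_mem hne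
      exact h2 (hup _ hmem (n - 2) (by omega) (by omega))
    · omega

end LocSet
section Dsets
variable {V : Type*} [Fintype V] {G : SimpleGraph V}

def Dset (G : SimpleGraph V) (a b : V) : Set V :=
  {x | x ≠ a ∧ x ≠ b ∧ G.dist a x ≠ G.dist b x}

lemma Dset_nonempty (hG : G.Connected) {a b : V} (h : ¬IsTwin G a b) :
    (Dset G a b).Nonempty := by
  obtain ⟨x, h1, h2, h3⟩ := exists_witness hG h
  exact ⟨x, h1, h2, h3⟩

lemma mem_Dset_twin (hG : G.Connected) {a b c c' : V} (hc : c ∈ Dset G a b)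
    (ht : IsTwin G c c') (hne : c' ≠ c) (ha : c' ≠ a) (hb : c' ≠ b) :
    c' ∈ Dset G a b := by
  obtain ⟨hca, hcb, hcd⟩ := hc
  have e1 : G.dist a c' = G.dist a c :=
    calc G.dist a c' = G.dist c' a := SimpleGraph.dist_comm
      _ = G.dist c a := (ht.dist_eq hG (Ne.symm hca) ha.symm).symm
      _ = G.dist a c := SimpleGraph.dist_comm
  have e2 : G.dist b c' = G.dist b c :=
    calc G.dist b c' = G.dist c' b := SimpleGraph.dist_comm
      _ = G.dist c b := (ht.dist_eq hG (Ne.symm hcb) hb.symm).symm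
      _ = G.dist b c := SimpleGraph.dist_comm
  refine ⟨ha, hb, ?_⟩
  rw [e1, e2]
  exact hcd

lemma safe_third (hG : G.Connected) {a b c c' : V} (hab : ¬IsTwin G a b)
    (ht : IsTwin G c c') (hne : c' ≠ c) (ha : c' ≠ a) (hb : c' ≠ b) :
    ∃ x ∈ Dset G a b, x ≠ c := by
  obtain ⟨x, hx⟩ := Dset_nonempty hG hab
  by_cases hxc : x = c
  · subst hxc
    exact ⟨c', mem_Dset_twin hG hx ht hne ha hb, hne⟩
  · exact ⟨x, hx, hxc⟩

end Dsets
section Shapes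
variable {V : Type*} [Fintype V] {G : SimpleGraph V}

lemma pair_locSet (hG : G.Connected) {n : ℕ} (hn : Fintype.card V = n) (h9 : 9 ≤ n)
    {a b : V} (hab : a ≠ b)
    (w : ∃ x, x ≠ a ∧ x ≠ b ∧ G.dist a x ≠ G.dist b x) :
    n - 1 ∈ locSet G := by
  set A : Set V := {a, b} with hA
  have hAne : A.Nonempty := ⟨a, Or.inl rfl⟩
  refine ⟨insert A (sings Aᶜ), part1_locating hG hAne ?_, ?_⟩
  · intro u hu v hv huv
    obtain ⟨x, hxa, hxb, hxd⟩ := w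
    have hxc : x ∈ Aᶜ := by
      intro h; rcases h with h | h; exact hxa h; exact hxb h
    rcases hu with rfl | hu <;> rcases hv with rfl | hv
    · exact absurd rfl huv
    · rw [Set.mem_singleton_iff] at hv; subst hv
      exact ⟨x, hxc, hxd⟩
    · rw [Set.mem_singleton_iff] at hu; subst hu
      exact ⟨x, hxc, hxd.symm⟩
    · rw [Set.mem_singleton_iff] at hu hv
      exact absurd (hu.trans hv.symm) huv
  · rw [part1_ncard hAne, ncard_compl_eq, Set.ncard_pair hab, hn]
    omega

lemma triple_locSet (hG : G.Connected) {n : ℕ} (hn : Fintype.card V = n) (h9 : 9 ≤ n)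
    {a b c : V} (hab : a ≠ b) (hac : a ≠ c) (hbc : b ≠ c)
    (w1 : ∃ x ∈ Dset G a b, x ≠ c) (w2 : ∃ x ∈ Dset G a c, x ≠ b)
    (w3 : ∃ x ∈ Dset G b c, x ≠ a) :
    n - 2 ∈ locSet G := by
  set A : Set V := {a, b, c} with hA
  have hAne : A.Nonempty := ⟨a, Or.inl rfl⟩
  have compl_mem : ∀ {x : V}, x ≠ a → x ≠ b → x ≠ c → x ∈ Aᶜ := by
    intro x h1 h2 h3 h
    rcases h with h | h | h
    exacts [h1 h, h2 h, h3 h]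
  have key : ∀ u ∈ A, ∀ v ∈ A, u ≠ v → ∃ x ∈ Aᶜ, G.dist u x ≠ G.dist v x := by
    have w1' : ∃ x ∈ Aᶜ, G.dist a x ≠ G.dist b x := by
      obtain ⟨x, ⟨h1, h2, h3⟩, h4⟩ := w1
      exact ⟨x, compl_mem h1 h2 h4, h3⟩
    have w2' : ∃ x ∈ Aᶜ, G.dist a x ≠ G.dist c x := by
      obtain ⟨x, ⟨h1, h2, h3⟩, h4⟩ := w2
      exact ⟨x, compl_mem h1 h4 h2, h3⟩
    have w3' : ∃ x ∈ Aᶜ, G.dist b x ≠ G.dist c x := by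
      obtain ⟨x, ⟨h1, h2, h3⟩, h4⟩ := w3
      exact ⟨x, compl_mem h4 h1 h2, h3⟩
    intro u hu v hv huv
    rcases hu with rfl | hu | hu <;> rcases hv with rfl | hv | hv <;>
      first
      | exact absurd rfl huv
      | skip
    all_goals try rw [Set.mem_singleton_iff] at *
    all_goals subst_vars
    all_goals try exact absurd rfl huv
    · exact w1'
    · exact w2'
    · obtain ⟨x, h1, h2⟩ := w1'; exact ⟨x, h1, h2.symm⟩
    · exact w3'
    · obtain ⟨x, h1, h2⟩ := w2'; exact ⟨x, h1, h2.symm⟩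
    · obtain ⟨x, h1, h2⟩ := w3'; exact ⟨x, h1, h2.symm⟩
  refine ⟨insert A (sings Aᶜ), part1_locating hG hAne key, ?_⟩
  have hA3 : A.ncard = 3 := by
    rw [hA, Set.ncard_insert_of_notMem (by simp [hab, hac]), Set.ncard_pair hbc]
  rw [part1_ncard hAne, ncard_compl_eq, hA3, hn]
  omega

lemma pairs_locSet (hG : G.Connected) {n : ℕ} (hn : Fintype.card V = n) (h9 : 9 ≤ n)
    {a b c d : V} (hab : a ≠ b) (hac : a ≠ c) (had : a ≠ d) (hbc : b ≠ c)
    (hbd : b ≠ d) (hcd : c ≠ d)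
    (w1 : ∃ x, (x ≠ a ∧ x ≠ b ∧ x ≠ c ∧ x ≠ d) ∧ G.dist a x ≠ G.dist b x)
    (w2 : ∃ x, (x ≠ a ∧ x ≠ b ∧ x ≠ c ∧ x ≠ d) ∧ G.dist c x ≠ G.dist d x) :
    n - 2 ∈ locSet G := by
  set A : Set V := {a, b} with hA
  set B : Set V := {c, d} with hB
  have hAne : A.Nonempty := ⟨a, Or.inl rfl⟩
  have hBne : B.Nonempty := ⟨c, Or.inl rfl⟩
  have hdisj : Disjoint A B := by
    rw [hA, hB, Set.disjoint_iff]
    rintro x ⟨hx1, hx2⟩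
    rcases hx1 with rfl | hx1
    · rcases hx2 with h | h
      · exact hac h
      · exact had h
    · rw [Set.mem_singleton_iff] at hx1; subst hx1
      rcases hx2 with h | h
      · exact hbc h
      · exact hbd h
  have compl_mem : ∀ {x : V}, x ≠ a → x ≠ b → x ≠ c → x ≠ d → x ∈ (A ∪ B)ᶜ := by
    intro x h1 h2 h3 h4 h
    rcases h with h | h
    · rcases h with h | h; exact h1 h; exact h2 h
    · rcases h with h | h; exact h3 h; exact h4 h
  have k1 : ∀ u ∈ A, ∀ v ∈ A, u ≠ v → ∃ x ∈ (A ∪ B)ᶜ, G.dist u x ≠ G.dist v x := by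
    intro u hu v hv huv
    obtain ⟨x, ⟨h1, h2, h3, h4⟩, hd⟩ := w1
    have hm := compl_mem h1 h2 h3 h4
    rcases hu with rfl | hu <;> rcases hv with rfl | hv
    · exact absurd rfl huv
    · rw [Set.mem_singleton_iff] at hv; subst hv; exact ⟨x, hm, hd⟩
    · rw [Set.mem_singleton_iff] at hu; subst hu; exact ⟨x, hm, hd.symm⟩
    · rw [Set.mem_singleton_iff] at hu hv; exact absurd (hu.trans hv.symm) huv
  have k2 : ∀ u ∈ B, ∀ v ∈ B, u ≠ v → ∃ x ∈ (A ∪ B)ᶜ, G.dist u x ≠ G.dist v x := by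
    intro u hu v hv huv
    obtain ⟨x, ⟨h1, h2, h3, h4⟩, hd⟩ := w2
    have hm := compl_mem h1 h2 h3 h4
    rcases hu with rfl | hu <;> rcases hv with rfl | hv
    · exact absurd rfl huv
    · rw [Set.mem_singleton_iff] at hv; subst hv; exact ⟨x, hm, hd⟩
    · rw [Set.mem_singleton_iff] at hu; subst hu; exact ⟨x, hm, hd.symm⟩
    · rw [Set.mem_singleton_iff] at hu hv; exact absurd (hu.trans hv.symm) huv
  refine ⟨insert A (insert B (sings (A ∪ B)ᶜ)), part2_locating hG hAne hBne hdisj k1 k2, ?_⟩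
  have hAB : (A ∪ B).ncard = 4 := by
    rw [Set.ncard_union_eq hdisj, hA, hB, Set.ncard_pair hab, Set.ncard_pair hcd]
  rw [part2_ncard hAne hBne hdisj, ncard_compl_eq, hAB, hn]
  omega

end Shapes

section TwinNum
variable {V : Type*} [Fintype V] {G : SimpleGraph V}

lemma mem_twinClass_self (u : V) : u ∈ twinClass G u := IsTwin.refl u

lemma twins_of_mem_twinClass {u a b : V} (ha : a ∈ twinClass G u)
    (hb : b ∈ twinClass G u) : IsTwin G a b :=
  IsTwin.trans (IsTwin.symm ha) hb

lemma twinNumber_bddAbove : BddAbove {k | ∃ u : V, (twinClass G u).ncard = k} := by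
  refine ⟨Fintype.card V, ?_⟩
  rintro k ⟨u, rfl⟩
  calc (twinClass G u).ncard ≤ (Set.univ : Set V).ncard :=
        Set.ncard_le_ncard (Set.subset_univ _) (Set.toFinite _)
    _ = Fintype.card V := by rw [Set.ncard_univ, Nat.card_eq_fintype_card]

lemma le_twinNumber (u : V) : (twinClass G u).ncard ≤ twinNumber G :=
  le_csSup twinNumber_bddAbove ⟨u, rfl⟩

lemma exists_twinClass_eq_twinNumber [Nonempty V] :
    ∃ u : V, (twinClass G u).ncard = twinNumber G := by
  have hne : {k | ∃ u : V, (twinClass G u).ncard = k}.Nonempty :=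
    ⟨(twinClass G (Classical.arbitrary V)).ncard, Classical.arbitrary V, rfl⟩
  exact Nat.sSup_mem hne twinNumber_bddAbove

/-- if some pair of vertices is not twins, no twin class is everything -/
lemma twinClass_ncard_lt {a0 b0 : V} (hnt : ¬IsTwin G a0 b0) (u : V) :
    (twinClass G u).ncard < Fintype.card V := by
  have hne : twinClass G u ≠ Set.univ := by
    intro h
    exact hnt (twins_of_mem_twinClass (h ▸ Set.mem_univ a0) (h ▸ Set.mem_univ b0))
  have hsub : twinClass G u ⊂ Set.univ := ⟨Set.subset_univ _, fun h => hne
    (Set.Subset.antisymm (Set.subset_univ _) h)⟩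
  have := Set.ncard_lt_ncard hsub (Set.toFinite _)
  rwa [Set.ncard_univ, Nat.card_eq_fintype_card] at this

end TwinNum
section Backward
variable {V : Type*} [Fintype V] {G : SimpleGraph V}

lemma backward_case1 (hG : G.Connected) {n : ℕ} (hn : Fintype.card V = n) (h9 : 9 ≤ n)
    {u : V} (hu : (twinClass G u).ncard = n - 1) :
    (n - 1 ∈ locSet G) ∧ (n - 2 ∉ locSet G) := by
  have hne : twinClass G u ≠ Set.univ := by
    intro h
    rw [h, Set.ncard_univ, Nat.card_eq_fintype_card, hn] at hu
    omega
  obtain ⟨z, hz⟩ := Set.ne_univ_iff_exists_notMem _ |>.mp hne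
  have hntz : ¬IsTwin G u z := hz
  have huz : u ≠ z := fun h => hz (h ▸ mem_twinClass_self u)
  constructor
  · exact pair_locSet hG hn h9 huz (by
      obtain ⟨x, h1, h2, h3⟩ := exists_witness hG hntz
      exact ⟨x, h1, h2, h3⟩)
  · rintro ⟨P, hL, hcard⟩
    have hinj := partOf_injOn_twins hG hL (W := twinClass G u)
      (fun a ha b hb => twins_of_mem_twinClass ha hb)
    have hle := Set.ncard_le_ncard_of_injOn (partOf hL.1)
      (fun a _ => partOf_mem hL.1 a) hinj (Set.toFinite P)
    rw [hu, hcard] at hle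
    omega

lemma backward_case2 (hG : G.Connected) {n : ℕ} (hn : Fintype.card V = n) (h9 : 9 ≤ n)
    {u : V} (hu : (twinClass G u).ncard = n - 2)
    (hclique : ∀ v ∈ twinClass G u, ∀ w ∈ twinClass G u, v ≠ w → G.Adj v w) :
    (n - 1 ∈ locSet G) ∧ (n - 2 ∉ locSet G) := by
  set W := twinClass G u with hW
  have hcompl : Wᶜ.ncard = 2 := by
    rw [ncard_compl_eq, hu, hn]; omega
  obtain ⟨p, q, hpq, hpqe⟩ := Set.ncard_eq_two.mp hcompl
  have hpW : p ∉ W := by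
    have : p ∈ Wᶜ := hpqe ▸ Set.mem_insert _ _
    exact this
  have hqW : q ∉ W := by
    have : q ∈ Wᶜ := hpqe ▸ Set.mem_insert_iff.mpr (Or.inr rfl)
    exact this
  -- adjacency to W is uniform for vertices outside W
  have huniform : ∀ t, t ∉ W → ∀ w ∈ W, (G.Adj t w ↔ G.Adj t u) := by
    intro t ht w hw
    have htw : t ≠ w := fun h => ht (h ▸ hw)
    have htu : t ≠ u := fun h => ht (h ▸ mem_twinClass_self u)
    have : G.Adj u t ↔ G.Adj w t := IsTwin.adj_iff hw htu htw
    constructor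
    · intro h; exact (this.mpr h.symm).symm
    · intro h; exact (this.mp h.symm).symm
  -- some vertex outside W is adjacent to all of W
  have ht0 : ∃ t0, t0 ∉ W ∧ ∀ w ∈ W, G.Adj t0 w := by
    by_cases hp : G.Adj p u
    · exact ⟨p, hpW, fun w hw => (huniform p hpW w hw).mpr hp⟩
    by_cases hq : G.Adj q u
    · exact ⟨q, hqW, fun w hw => (huniform q hqW w hw).mpr hq⟩
    · exfalso
      have hclosed : ∀ x ∈ W, ∀ y, G.Adj x y → y ∈ W := by
        intro x hx y hxy
        by_contra hyW
        have : y ∈ Wᶜ := hyW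
        rw [hpqe] at this
        rcases this with rfl | h
        · exact hp ((huniform y hyW x hx).mp hxy.symm)
        · rw [Set.mem_singleton_iff] at h; subst h
          exact hq ((huniform y hyW x hx).mp hxy.symm)
      exact closed_not_reachable hclosed (mem_twinClass_self u) hpW (hG.preconnected u p)
  obtain ⟨t0, ht0W, ht0adj⟩ := ht0
  have hnt : ¬IsTwin G u t0 := fun h => ht0W h
  have hut0 : u ≠ t0 := fun h => ht0W (h ▸ mem_twinClass_self u)
  constructor
  · exact pair_locSet hG hn h9 hut0 (by
      obtain ⟨x, h1, h2, h3⟩ := exists_witness hG hnt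
      exact ⟨x, h1, h2, h3⟩)
  · rintro ⟨P, hL, hcard⟩
    set f := partOf hL.1 with hf
    have hinj : Set.InjOn f W := partOf_injOn_twins hG hL
      (fun a ha b hb => twins_of_mem_twinClass ha hb)
    have himg : f '' W = P := by
      apply Set.eq_of_subset_of_ncard_le
      · rintro T ⟨w, hw, rfl⟩
        exact partOf_mem hL.1 w
      · rw [Set.ncard_image_of_injOn hinj, hu, hcard]
      · exact Set.toFinite P
    set A := f t0 with hA
    have hAP : A ∈ P := partOf_mem hL.1 t0
    have ht0A : t0 ∈ A := mem_partOf hL.1 t0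
    obtain ⟨a, haW, hfa⟩ := himg.symm ▸ hAP
    have haA : a ∈ A := hfa ▸ mem_partOf hL.1 a
    have hat0 : a ≠ t0 := fun h => ht0W (h ▸ haW)
    have hkey : ∀ T ∈ P, setDist G t0 T = setDist G a T := by
      intro T hT
      by_cases hTA : T = A
      · subst hTA
        rw [setDist_eq_zero_of_mem ht0A, setDist_eq_zero_of_mem haA]
      · obtain ⟨w'', hw''W, hfw⟩ := himg.symm ▸ hT
        have hw''T : w'' ∈ T := hfw ▸ mem_partOf hL.1 w''
        have hw''a : w'' ≠ a := by
          intro h; subst h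
          exact hTA (part_eq_of_mem hL.1 hT hAP hw''T haA)
        have hw''t0 : w'' ≠ t0 := fun h => ht0W (h ▸ hw''W)
        have ht0T : t0 ∉ T := fun h => hTA (part_eq_of_mem hL.1 hT hAP h ht0A)
        have haT : a ∉ T := fun h => hTA (part_eq_of_mem hL.1 hT hAP h haA)
        have hTne : T.Nonempty := ⟨w'', hw''T⟩
        have e1 : setDist G t0 T = 1 := by
          have hle : setDist G t0 T ≤ 1 := by
            have : G.dist t0 w'' = 1 :=
              SimpleGraph.dist_eq_one_iff_adj.mpr (ht0adj w'' hw''W)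
            rw [← this]; exact setDist_le hw''T
          have hne0 := setDist_ne_zero hG hTne ht0T
          omega
        have e2 : setDist G a T = 1 := by
          have hle : setDist G a T ≤ 1 := by
            have : G.dist a w'' = 1 :=
              SimpleGraph.dist_eq_one_iff_adj.mpr (hclique a haW w'' hw''W hw''a.symm)
            rw [← this]; exact setDist_le hw''T
          have hne0 := setDist_ne_zero hG hTne haT
          omega
        rw [e1, e2]
    exact hat0.symm (hL.2 t0 a hkey)

end Backward
section Forward1
variable {V : Type*} [Fintype V] {G : SimpleGraph V}

lemma Dset_comm (a b : V) : Dset G a b = Dset G b a := by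
  ext x
  exact ⟨fun ⟨h1, h2, h3⟩ => ⟨h2, h1, h3.symm⟩, fun ⟨h1, h2, h3⟩ => ⟨h2, h1, h3.symm⟩⟩

lemma clique_of_adj {u x0 y0 : V} (hx0 : x0 ∈ twinClass G u) (hy0 : y0 ∈ twinClass G u)
    (hne : x0 ≠ y0) (hadj : G.Adj x0 y0) :
    ∀ x ∈ twinClass G u, ∀ y ∈ twinClass G u, x ≠ y → G.Adj x y := by
  have step1 : ∀ y ∈ twinClass G u, y ≠ x0 → G.Adj x0 y := by
    intro y hy hyx
    by_cases hyy0 : y = y0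
    · exact hyy0 ▸ hadj
    · have ht : IsTwin G y0 y := twins_of_mem_twinClass hy0 hy
      exact ((ht.adj_iff (G.ne_of_adj hadj) hyx.symm).mp hadj.symm).symm
  intro x hx y hy hxy
  by_cases hxx0 : x = x0
  · exact hxx0 ▸ step1 y hy (fun h => hxy (hxx0 ▸ h ▸ rfl))
  · by_cases hyx0 : y = x0
    · exact (hyx0 ▸ step1 x hx hxx0).symm
    · have ht : IsTwin G x0 x := twins_of_mem_twinClass hx0 hx
      exact (ht.adj_iff hyx0 (Ne.symm hxy)).mp (step1 y hy hyx0)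

lemma six_set_triple (hG : G.Connected) {S : Finset V} (hS : S.card = 6)
    (hnt : ∀ a ∈ S, ∀ b ∈ S, a ≠ b → ¬IsTwin G a b) :
    ∃ a b c : V, a ∈ S ∧ b ∈ S ∧ c ∈ S ∧ a ≠ b ∧ a ≠ c ∧ b ≠ c ∧
      (∃ x ∈ Dset G a b, x ≠ c) ∧ (∃ x ∈ Dset G a c, x ≠ b) ∧
      (∃ x ∈ Dset G b c, x ≠ a) := by
  by_contra hcon
  push_neg at hcon
  -- every 3-subset of S has a killer pair
  have hsingle : ∀ a b c : V, a ∈ S → b ∈ S → a ≠ b →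
      (¬∃ x ∈ Dset G a b, x ≠ c) → Dset G a b = {c} := by
    intro a b c ha hb hab hno
    push_neg at hno
    obtain ⟨x, hx⟩ := Dset_nonempty hG (hnt a ha b hb hab)
    have hxc : x = c := hno x hx
    apply Set.eq_singleton_iff_unique_mem.mpr
    exact ⟨hxc ▸ hx, fun y hy => hno y hy⟩
  have hkill : ∀ t ∈ S.powersetCard 3, ∃ p : Finset V, p ∈ S.powersetCard 2 ∧
      ∃ a b w : V, p = {a, b} ∧ t = {a, b, w} ∧ a ≠ b ∧ w ∉ p ∧
        Dset G a b = {w} := by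
    intro t ht
    rw [Finset.mem_powersetCard] at ht
    obtain ⟨hts, htc⟩ := ht
    obtain ⟨a, b, c, hab, hac, hbc, hteq⟩ := Finset.card_eq_three.mp htc
    have ha : a ∈ S := hts (hteq ▸ by simp)
    have hb : b ∈ S := hts (hteq ▸ by simp)
    have hc : c ∈ S := hts (hteq ▸ by simp)
    have hmem2 : ∀ {x y : V}, x ∈ S → y ∈ S → x ≠ y →
        ({x, y} : Finset V) ∈ S.powersetCard 2 := by
      intro x y hx hy hxy
      rw [Finset.mem_powersetCard]
      constructor
      · intro z hz; rcases Finset.mem_insert.mp hz with rfl | hz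
        · exact hx
        · rw [Finset.mem_singleton.mp hz]; exact hy
      · exact Finset.card_pair hxy
    by_cases h1 : ∃ x ∈ Dset G a b, x ≠ c
    case neg =>
      refine ⟨{a, b}, hmem2 ha hb hab, a, b, c, rfl, hteq, hab, ?_, hsingle a b c ha hb hab h1⟩
      simp only [Finset.mem_insert, Finset.mem_singleton]
      push_neg
      exact ⟨hac.symm, hbc.symm⟩
    by_cases h2 : ∃ x ∈ Dset G a c, x ≠ b
    case neg =>
      refine ⟨{a, c}, hmem2 ha hc hac, a, c, b, rfl, ?_, hac, ?_,
        hsingle a c b ha hc hac h2⟩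
      · rw [hteq]; ext x; simp; tauto
      · simp only [Finset.mem_insert, Finset.mem_singleton]
        push_neg
        exact ⟨hab.symm, hbc⟩
    · have h3 : ¬∃ x ∈ Dset G b c, x ≠ a := by
        push_neg
        exact hcon a b c ha hb hc hab hac hbc h1 h2
      refine ⟨{b, c}, hmem2 hb hc hbc, b, c, a, rfl, ?_, hbc, ?_,
        hsingle b c a hb hc hbc h3⟩
      · rw [hteq]; ext x; simp; tauto
      · simp only [Finset.mem_insert, Finset.mem_singleton]
        push_neg
        exact ⟨hab, hac⟩
  classical
  set F : Finset V → Finset V := fun t =>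
    if h : t ∈ S.powersetCard 3 then (hkill t h).choose else ∅ with hF
  have hFmem : ∀ t ∈ S.powersetCard 3, F t ∈ S.powersetCard 2 := by
    intro t ht
    rw [hF]; simp only [ht, dif_pos]
    exact (hkill t ht).choose_spec.1
  have hFinj : Set.InjOn F (S.powersetCard 3 : Finset (Finset V)) := by
    intro t1 ht1 t2 ht2 he
    rw [Finset.mem_coe] at ht1 ht2
    have s1 := (hkill t1 ht1).choose_spec
    have s2 := (hkill t2 ht2).choose_spec
    rw [hF] at he
    simp only [ht1, ht2, dif_pos] at he
    obtain ⟨-, a1, b1, w1, hp1, hteq1, hab1, hw1p, hD1⟩ := s1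
    obtain ⟨-, a2, b2, w2, hp2, hteq2, hab2, hw2p, hD2⟩ := s2
    rw [hp1, hp2] at he
    have hcase : (a2 = a1 ∧ b2 = b1) ∨ (a2 = b1 ∧ b2 = a1) := by
      have ha2 : a2 ∈ ({a1, b1} : Finset V) := he ▸ (by simp)
      have hb2 : b2 ∈ ({a1, b1} : Finset V) := he ▸ (by simp)
      simp only [Finset.mem_insert, Finset.mem_singleton] at ha2 hb2
      rcases ha2 with h1 | h1
      · rcases hb2 with h2 | h2
        · exact absurd (h1.trans h2.symm) hab2
        · exact Or.inl ⟨h1, h2⟩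
      · rcases hb2 with h2 | h2
        · exact Or.inr ⟨h1, h2⟩
        · exact absurd (h1.trans h2.symm) hab2
    have hDeq : Dset G a2 b2 = Dset G a1 b1 := by
      rcases hcase with ⟨h1, h2⟩ | ⟨h1, h2⟩
      · rw [h1, h2]
      · rw [h1, h2, Dset_comm]
    have hw : w2 = w1 := by
      have h := hD2
      rw [hDeq, hD1] at h
      exact (Set.singleton_eq_singleton_iff.mp h).symm
    rw [hteq1, hteq2, hw]
    rcases hcase with ⟨h1, h2⟩ | ⟨h1, h2⟩
    · rw [h1, h2]
    · rw [h1, h2]; ext x; simp; tauto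
  have hc3 : (S.powersetCard 3).card = 20 := by
    rw [Finset.card_powersetCard, hS]
    decide
  have hc2 : (S.powersetCard 2).card = 15 := by
    rw [Finset.card_powersetCard, hS]
    decide
  have := Finset.card_le_card_of_injOn F hFmem hFinj
  rw [hc3, hc2] at this
  omega

end Forward1
section Forward2
variable {V : Type*} [Fintype V] {G : SimpleGraph V}

def BigT (G : SimpleGraph V) (v : V) : Prop := ∃ w, w ≠ v ∧ IsTwin G v w

lemma nontwin_symm {a b : V} (h : ¬IsTwin G a b) : ¬IsTwin G b a :=
  fun ht => h ht.symm

lemma nontwin_ne {a b : V} (h : ¬IsTwin G a b) : a ≠ b := by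
  rintro rfl; exact h (IsTwin.refl a)

lemma safe_big (hG : G.Connected) {a b c : V} (hab : ¬IsTwin G a b)
    (hc : BigT G c) (hac : ¬IsTwin G a c) (hbc : ¬IsTwin G b c) :
    ∃ x ∈ Dset G a b, x ≠ c := by
  obtain ⟨c', hne, ht⟩ := hc
  have hca : c' ≠ a := by rintro rfl; exact hac ht.symm
  have hcb : c' ≠ b := by rintro rfl; exact hbc ht.symm
  exact safe_third hG hab ht hne hca hcb

lemma classes_disjoint {p q : V} (h : ¬IsTwin G p q) :
    ∀ v, v ∈ twinClass G p → v ∈ twinClass G q → False := by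
  intro v hp hq
  exact h (IsTwin.trans hp (IsTwin.symm hq))

lemma ncard_ge_two_of_big {p : V} (h : BigT G p) : 2 ≤ (twinClass G p).ncard := by
  obtain ⟨p', hne, ht⟩ := h
  have : ({p, p'} : Set V) ⊆ twinClass G p := by
    rintro x (rfl | hx)
    · exact mem_twinClass_self _
    · rw [Set.mem_singleton_iff] at hx; subst hx; exact ht
  calc 2 = ({p, p'} : Set V).ncard := (Set.ncard_pair hne.symm).symm
    _ ≤ _ := Set.ncard_le_ncard this (Set.toFinite _)

lemma join_case (hG : G.Connected) {n : ℕ} (hn : Fintype.card V = n) (h9 : 9 ≤ n)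
    {p q : V} (hdisjnt : ¬IsTwin G p q)
    (hPind : ∀ x ∈ twinClass G p, ∀ y ∈ twinClass G p, x ≠ y → ¬G.Adj x y)
    (hP3 : 3 ≤ (twinClass G p).ncard)
    (hQ2 : 2 ≤ (twinClass G q).ncard)
    (hcross : ∀ x ∈ twinClass G p, ∀ y ∈ twinClass G q, G.Adj x y) :
    n - 2 ∈ locSet G := by
  set P := twinClass G p with hP
  set Q := twinClass G q with hQ
  have hdisj : ∀ v, v ∈ P → v ∈ Q → False := classes_disjoint hdisjnt
  -- pick three distinct elements of P
  obtain ⟨a, ha⟩ := Set.nonempty_of_ncard_ne_zero (s := P) (by omega)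
  have hc1 : 2 ≤ (P \ {a}).ncard := by
    rw [Set.ncard_diff_singleton_of_mem ha]; omega
  obtain ⟨c, hc⟩ := Set.nonempty_of_ncard_ne_zero (s := P \ {a}) (by omega)
  have hx1 : 1 ≤ ((P \ {a}) \ {c}).ncard := by
    rw [Set.ncard_diff_singleton_of_mem hc]; omega
  obtain ⟨x, hx⟩ := Set.nonempty_of_ncard_ne_zero (s := (P \ {a}) \ {c}) (by omega)
  obtain ⟨⟨hxP, hxa⟩, hxc⟩ := hx
  obtain ⟨hcP, hca⟩ := hc
  have hxa : x ≠ a := hxa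
  have hxc : x ≠ c := hxc
  have hca : c ≠ a := hca
  -- pick two distinct elements of Q
  obtain ⟨b, hb⟩ := Set.nonempty_of_ncard_ne_zero (s := Q) (by omega)
  have hd1 : 1 ≤ (Q \ {b}).ncard := by
    rw [Set.ncard_diff_singleton_of_mem hb]; omega
  obtain ⟨d, hd⟩ := Set.nonempty_of_ncard_ne_zero (s := Q \ {b}) (by omega)
  obtain ⟨hdQ, hdb⟩ := hd
  have hdb : d ≠ b := hdb
  -- distances
  have dist1 : ∀ u ∈ P, ∀ v ∈ Q, G.dist u v = 1 :=
    fun u hu v hv => SimpleGraph.dist_eq_one_iff_adj.mpr (hcross u hu v hv)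
  have dist2 : ∀ u ∈ P, ∀ v ∈ P, u ≠ v → G.dist u v = 2 := by
    intro u hu v hv huv
    have hne0 : G.dist u v ≠ 0 := fun h => huv (hG.dist_eq_zero_iff.mp h)
    have hne1 : G.dist u v ≠ 1 := fun h =>
      hPind u hu v hv huv (SimpleGraph.dist_eq_one_iff_adj.mp h)
    have hle : G.dist u v ≤ 2 := by
      calc G.dist u v ≤ G.dist u b + G.dist b v := hG.dist_triangle
        _ ≤ 1 + 1 := by
            gcongr
            · exact le_of_eq (dist1 u hu b hb)
            · rw [SimpleGraph.dist_comm]; exact le_of_eq (dist1 v hv b hb)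
        _ = 2 := rfl
    omega
  -- apply pairs
  apply pairs_locSet hG hn h9 (a := a) (b := b) (c := c) (d := d)
  · rintro rfl; exact hdisj a ha hb
  · exact Ne.symm hca
  · rintro rfl; exact hdisj a ha hdQ
  · rintro rfl; exact hdisj b hcP hb
  · exact Ne.symm hdb
  · rintro rfl; exact hdisj c hcP hdQ
  · refine ⟨x, ⟨hxa, ?_, hxc, ?_⟩, ?_⟩
    · rintro rfl; exact hdisj x hxP hb
    · rintro rfl; exact hdisj x hxP hdQ
    · rw [dist2 a ha x hxP (Ne.symm hxa)]
      rw [SimpleGraph.dist_comm]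
      rw [dist1 x hxP b hb]
      omega
  · refine ⟨x, ⟨hxa, ?_, hxc, ?_⟩, ?_⟩
    · rintro rfl; exact hdisj x hxP hb
    · rintro rfl; exact hdisj x hxP hdQ
    · rw [dist2 c hcP x hxP (Ne.symm hxc)]
      rw [SimpleGraph.dist_comm]
      rw [dist1 x hxP d hdQ]
      omega

lemma cycle_case (hG : G.Connected) {p p' y z w : V}
    (hp'ne : p' ≠ p) (hp't : IsTwin G p p')
    (hyP : ¬IsTwin G p y) (hzP : ¬IsTwin G p z) (hwP : ¬IsTwin G p w)
    (hyz : y ≠ z) (hyw : y ≠ w) (hzw : z ≠ w)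
    (hcover : ∀ v : V, IsTwin G p v ∨ v = y ∨ v = z ∨ v = w)
    (h1 : ∀ x ∈ Dset G p y, x = z) (h2 : ∀ x ∈ Dset G p z, x = w)
    (h3 : ∀ x ∈ Dset G p w, x = y) : False := by
  have hpy : p ≠ y := nontwin_ne hyP
  have hpz : p ≠ z := nontwin_ne hzP
  have hpw : p ≠ w := nontwin_ne hwP
  -- memberships
  have hzD : z ∈ Dset G p y := by
    obtain ⟨x, hx⟩ := Dset_nonempty hG hyP
    exact (h1 x hx) ▸ hx
  have hwD : w ∈ Dset G p z := by
    obtain ⟨x, hx⟩ := Dset_nonempty hG hzP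
    exact (h2 x hx) ▸ hx
  have hyD : y ∈ Dset G p w := by
    obtain ⟨x, hx⟩ := Dset_nonempty hG hwP
    exact (h3 x hx) ▸ hx
  -- transfers
  have E1 : ∀ x, x ≠ p → x ≠ y → x ≠ z → G.dist p x = G.dist y x := by
    intro x h1' h2' h3'
    by_contra hd
    exact h3' (h1 x ⟨h1', h2', hd⟩)
  have E2 : ∀ x, x ≠ p → x ≠ z → x ≠ w → G.dist p x = G.dist z x := by
    intro x h1' h2' h3'
    by_contra hd
    exact h3' (h2 x ⟨h1', h2', hd⟩)
  have E3 : ∀ x, x ≠ p → x ≠ w → x ≠ y → G.dist p x = G.dist w x := by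
    intro x h1' h2' h3'
    by_contra hd
    exact h3' (h3 x ⟨h1', h2', hd⟩)
  have hp'y : p' ≠ y := by rintro rfl; exact hyP hp't
  have hp'z : p' ≠ z := by rintro rfl; exact hzP hp't
  have hp'w : p' ≠ w := by rintro rfl; exact hwP hp't
  set π := G.dist p p' with hπ
  have hπy : G.dist y p' = π := (E1 p' hp'ne hp'y hp'z).symm
  have hπz : G.dist z p' = π := (E2 p' hp'ne hp'z hp'w).symm
  have hπw : G.dist w p' = π := (E3 p' hp'ne hp'w hp'y).symm
  set A := G.dist p y with hA
  set B := G.dist p z with hB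
  set C := G.dist p w with hC
  have eA : G.dist z y = A := (E2 y hpy.symm hyz hyw).symm
  have eB : G.dist w z = B := (E3 z hpz.symm hzw hyz.symm).symm
  have eC : G.dist y w = C := (E1 w hpw.symm hyw.symm hzw.symm).symm
  have nBA : B ≠ A := by
    have := hzD.2.2
    rwa [SimpleGraph.dist_comm (u := y), eA] at this
  have nCB : C ≠ B := by
    have := hwD.2.2
    rwa [SimpleGraph.dist_comm (u := z), eB] at this
  have nAC : A ≠ C := by
    have := hyD.2.2
    rwa [SimpleGraph.dist_comm (u := w), eC] at this
  have hApos : 1 ≤ A := hG.pos_dist_of_ne hpy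
  have hBpos : 1 ≤ B := hG.pos_dist_of_ne hpz
  have hCpos : 1 ≤ C := hG.pos_dist_of_ne hpw
  have hAle : A ≤ π + π := by
    calc A ≤ G.dist p p' + G.dist p' y := hG.dist_triangle
      _ = π + π := by rw [SimpleGraph.dist_comm (u := p') (v := y), hπy, ← hπ]
  have hBle : B ≤ π + π := by
    calc B ≤ G.dist p p' + G.dist p' z := hG.dist_triangle
      _ = π + π := by rw [SimpleGraph.dist_comm (u := p') (v := z), hπz, ← hπ]
  have hCle : C ≤ π + π := by
    calc C ≤ G.dist p p' + G.dist p' w := hG.dist_triangle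
      _ = π + π := by rw [SimpleGraph.dist_comm (u := p') (v := w), hπw, ← hπ]
  rcases twin_dist hG hp't hp'ne.symm with h1' | h2'
  · rw [← hπ] at h1' -- π = 1
    omega
  · -- π = 2
    have hπ2 : π = 2 := h2'
    have hnadj : ¬G.Adj p p' := fun h => by
      have := SimpleGraph.dist_eq_one_iff_adj.mpr h
      rw [← hπ] at this; omega
    have hnady : ¬G.Adj p y := by
      intro h
      have h' : G.Adj p' y := (hp't.adj_iff hpy.symm hp'y.symm).mp h
      have := SimpleGraph.dist_eq_one_iff_adj.mpr h'
      rw [SimpleGraph.dist_comm] at this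
      rw [hπy] at this
      omega
    have hnadz : ¬G.Adj p z := by
      intro h
      have h' : G.Adj p' z := (hp't.adj_iff hpz.symm hp'z.symm).mp h
      have := SimpleGraph.dist_eq_one_iff_adj.mpr h'
      rw [SimpleGraph.dist_comm] at this
      rw [hπz] at this
      omega
    have hnadw : ¬G.Adj p w := by
      intro h
      have h' : G.Adj p' w := (hp't.adj_iff hpw.symm hp'w.symm).mp h
      have := SimpleGraph.dist_eq_one_iff_adj.mpr h'
      rw [SimpleGraph.dist_comm] at this
      rw [hπw] at this
      omega
    obtain ⟨t, ht⟩ := exists_adj hG hpy.symm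
    have htp : t ≠ p := (G.ne_of_adj ht).symm
    rcases hcover t with htw | rfl | rfl | rfl
    · -- t is a twin of p
      by_cases htp' : t = p'
      · exact hnadj (htp' ▸ ht)
      · have htt : IsTwin G t p' := IsTwin.trans (IsTwin.symm htw) hp't
        have : G.dist t p = G.dist p' p := htt.dist_eq hG htp.symm hp'ne.symm
        have h1'' : G.dist p t = 1 := SimpleGraph.dist_eq_one_iff_adj.mpr ht
        rw [SimpleGraph.dist_comm] at h1''
        rw [h1''] at this
        rw [SimpleGraph.dist_comm (u := p') (v := p), ← hπ] at this
        omega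
    · exact hnady ht
    · exact hnadz ht
    · exact hnadw ht

end Forward2
section Construct
variable {V : Type*} [Fintype V] {G : SimpleGraph V}

lemma construct (hG : G.Connected) {n : ℕ} (hn : Fintype.card V = n) (h9 : 9 ≤ n)
    (hnt : ∃ a b : V, ¬IsTwin G a b)
    (hU1 : ∀ u : V, (twinClass G u).ncard ≠ n - 1)
    (hU2 : ∀ u : V, (twinClass G u).ncard = n - 2 →
      ¬(∀ v ∈ twinClass G u, ∀ w ∈ twinClass G u, v ≠ w → G.Adj v w)) :
    n - 2 ∈ locSet G := by
  obtain ⟨a0, b0, hnt0⟩ := hnt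
  by_cases hA : ∃ a b c : V, ¬IsTwin G a b ∧ ¬IsTwin G a c ∧ ¬IsTwin G b c ∧
      BigT G a ∧ BigT G b ∧ BigT G c
  · obtain ⟨a, b, c, hab, hac, hbc, hBa, hBb, hBc⟩ := hA
    exact triple_locSet hG hn h9 (nontwin_ne hab) (nontwin_ne hac) (nontwin_ne hbc)
      (safe_big hG hab hBc hac hbc)
      (safe_big hG hac hBb hab (nontwin_symm hbc))
      (safe_big hG hbc hBa (nontwin_symm hab) (nontwin_symm hac))
  by_cases hB : ∃ p q : V, ¬IsTwin G p q ∧ BigT G p ∧ BigT G q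
  · obtain ⟨p, q, hpq, hBp, hBq⟩ := hB
    have htriplepq : ∀ z : V, ¬BigT G z → (∃ x ∈ Dset G p q, x ≠ z) →
        n - 2 ∈ locSet G := by
      intro z hz w1
      have hzp : z ≠ p := fun h => hz (h ▸ hBp)
      have hzq : z ≠ q := fun h => hz (h ▸ hBq)
      have hpz : ¬IsTwin G p z := fun ht => hz ⟨p, hzp.symm, ht.symm⟩
      have hqz : ¬IsTwin G q z := fun ht => hz ⟨q, hzq.symm, ht.symm⟩
      exact triple_locSet hG hn h9 (nontwin_ne hpq) (nontwin_ne hpz) (nontwin_ne hqz)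
        w1
        (safe_big hG hpz hBq hpq (nontwin_symm hqz))
        (safe_big hG hqz hBp (nontwin_symm hpq) (nontwin_symm hpz))
    by_cases hB1 : ∃ z1 z2 : V, z1 ≠ z2 ∧ ¬BigT G z1 ∧ ¬BigT G z2
    · obtain ⟨z1, z2, h12, hz1, hz2⟩ := hB1
      obtain ⟨x0, hx0⟩ := Dset_nonempty hG hpq
      by_cases hx01 : x0 = z1
      · refine htriplepq z2 hz2 ⟨x0, hx0, ?_⟩
        rw [hx01]; exact h12
      · exact htriplepq z1 hz1 ⟨x0, hx0, hx01⟩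
    by_cases hB2 : ∃ z0 : V, ¬BigT G z0
    · obtain ⟨z0, hz0⟩ := hB2
      by_cases hDz : ∃ x ∈ Dset G p q, x ≠ z0
      · exact htriplepq z0 hz0 hDz
      · push_neg at hDz
        have hz0D : z0 ∈ Dset G p q := by
          obtain ⟨x, hx⟩ := Dset_nonempty hG hpq
          exact (hDz x hx) ▸ hx
        obtain ⟨hz0p, hz0q, hz0d⟩ := hz0D
        obtain ⟨p', hp'ne, hp't⟩ := hBp
        obtain ⟨q', hq'ne, hq't⟩ := hBq
        have hz0p' : z0 ≠ p' := by
          rintro rfl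
          exact hz0 ⟨p, Ne.symm hz0p, hp't.symm⟩
        have hz0q' : z0 ≠ q' := by
          rintro rfl
          exact hz0 ⟨q, Ne.symm hz0q, hq't.symm⟩
        have hpq_ne : p ≠ q := nontwin_ne hpq
        have hpq' : p ≠ q' := by rintro rfl; exact hpq hq't.symm
        have hp'q : q ≠ p' := by rintro rfl; exact hpq hp't
        have hp'q' : p' ≠ q' := by
          rintro rfl
          exact hpq (hp't.trans hq't.symm)
        apply pairs_locSet hG hn h9 hpq_ne (Ne.symm hp'ne) hpq' hp'q (Ne.symm hq'ne) hp'q'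
        · exact ⟨z0, ⟨hz0p, hz0q, hz0p', hz0q'⟩, hz0d⟩
        · refine ⟨z0, ⟨hz0p, hz0q, hz0p', hz0q'⟩, ?_⟩
          have e1 : G.dist p' z0 = G.dist p z0 := (hp't.dist_eq hG hz0p hz0p').symm
          have e2 : G.dist q' z0 = G.dist q z0 := (hq't.dist_eq hG hz0q hz0q').symm
          rw [e1, e2]; exact hz0d
    · -- all vertices are big
      push_neg at hB2
      have hcover : ∀ v, v ∈ twinClass G p ∨ v ∈ twinClass G q := by
        intro v
        by_contra hcon
        push_neg at hcon
        exact hA ⟨p, q, v, hpq, hcon.1, hcon.2, hBp, hBq, hB2 v⟩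
      have hdisj := classes_disjoint hpq
      have hcross_iff : ∀ x ∈ twinClass G p, ∀ y ∈ twinClass G q,
          (G.Adj x y ↔ G.Adj p q) := by
        intro x hx y hy
        have hyp : y ≠ p := fun h => hdisj y (by rw [h]; exact mem_twinClass_self p) hy
        have hyx : y ≠ x := fun h => hdisj y (by rw [h]; exact hx) hy
        have hpq2 : p ≠ q := nontwin_ne hpq
        have hpy : p ≠ y := fun h => hdisj p (mem_twinClass_self p) (by rw [h]; exact hy)
        calc G.Adj x y ↔ G.Adj p y := ((hx : IsTwin G p x).adj_iff hyp hyx).symm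
          _ ↔ G.Adj y p := by rw [SimpleGraph.adj_comm]
          _ ↔ G.Adj q p := ((hy : IsTwin G q y).adj_iff hpq2 hpy).symm
          _ ↔ G.Adj p q := by rw [SimpleGraph.adj_comm]
      by_cases hpqadj : G.Adj p q
      · have hcross : ∀ x ∈ twinClass G p, ∀ y ∈ twinClass G q, G.Adj x y :=
          fun x hx y hy => (hcross_iff x hx y hy).mpr hpqadj
        have hcross' : ∀ x ∈ twinClass G q, ∀ y ∈ twinClass G p, G.Adj x y :=
          fun x hx y hy => (hcross y hy x hx).symm
        have hP2 : 2 ≤ (twinClass G p).ncard := ncard_ge_two_of_big hBp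
        have hQ2 : 2 ≤ (twinClass G q).ncard := ncard_ge_two_of_big hBq
        have hPQdisj : Disjoint (twinClass G p) (twinClass G q) :=
          Set.disjoint_left.mpr (fun {a} ha hb => hdisj a ha hb)
        have hun : twinClass G p ∪ twinClass G q = Set.univ :=
          Set.eq_univ_of_forall (fun v => by
            rcases hcover v with h | h
            · exact Set.mem_union_left _ h
            · exact Set.mem_union_right _ h)
        have hPQn : (twinClass G p).ncard + (twinClass G q).ncard = n := by
          have h := Set.ncard_union_eq hPQdisj (Set.toFinite _) (Set.toFinite _)
          rw [hun, Set.ncard_univ, Nat.card_eq_fintype_card, hn] at h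
          omega
        have hdichP : (∀ x ∈ twinClass G p, ∀ y ∈ twinClass G p, x ≠ y → G.Adj x y) ∨
            (∀ x ∈ twinClass G p, ∀ y ∈ twinClass G p, x ≠ y → ¬G.Adj x y) := by
          by_cases h : ∃ x ∈ twinClass G p, ∃ y ∈ twinClass G p, x ≠ y ∧ G.Adj x y
          · obtain ⟨x, hx, y, hy, hxy, hadj⟩ := h
            exact Or.inl (clique_of_adj hx hy hxy hadj)
          · push_neg at h
            exact Or.inr h
        have hdichQ : (∀ x ∈ twinClass G q, ∀ y ∈ twinClass G q, x ≠ y → G.Adj x y) ∨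
            (∀ x ∈ twinClass G q, ∀ y ∈ twinClass G q, x ≠ y → ¬G.Adj x y) := by
          by_cases h : ∃ x ∈ twinClass G q, ∃ y ∈ twinClass G q, x ≠ y ∧ G.Adj x y
          · obtain ⟨x, hx, y, hy, hxy, hadj⟩ := h
            exact Or.inl (clique_of_adj hx hy hxy hadj)
          · push_neg at h
            exact Or.inr h
        have hnotboth : ¬((∀ x ∈ twinClass G p, ∀ y ∈ twinClass G p, x ≠ y → G.Adj x y) ∧
            (∀ x ∈ twinClass G q, ∀ y ∈ twinClass G q, x ≠ y → G.Adj x y)) := by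
          rintro ⟨hPc, hQc⟩
          apply hpq
          unfold IsTwin
          ext x
          simp only [Set.mem_diff, SimpleGraph.mem_neighborSet, Set.mem_singleton_iff]
          constructor
          · rintro ⟨hadj, hxq⟩
            have hxp : x ≠ p := (G.ne_of_adj hadj).symm
            refine ⟨?_, hxp⟩
            rcases hcover x with hxP | hxQ
            · exact (hcross x hxP q (mem_twinClass_self q)).symm
            · exact hQc q (mem_twinClass_self q) x hxQ (Ne.symm hxq)
          · rintro ⟨hadj, hxp⟩
            have hxq : x ≠ q := (G.ne_of_adj hadj).symm
            refine ⟨?_, hxq⟩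
            rcases hcover x with hxP | hxQ
            · exact hPc p (mem_twinClass_self p) x hxP (Ne.symm hxp)
            · exact (hcross' x hxQ p (mem_twinClass_self p)).symm
        rcases hdichP with hPcl | hPind
        · rcases hdichQ with hQcl | hQind
          · exact absurd ⟨hPcl, hQcl⟩ hnotboth
          · by_cases hQ3 : 3 ≤ (twinClass G q).ncard
            · exact join_case hG hn h9 (nontwin_symm hpq) hQind hQ3 hP2 hcross'
            · have hPn : (twinClass G p).ncard = n - 2 := by omega
              exact absurd hPcl (hU2 p hPn)
        · by_cases hP3 : 3 ≤ (twinClass G p).ncard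
          · exact join_case hG hn h9 hpq hPind hP3 hQ2 hcross
          · have hQn : (twinClass G q).ncard = n - 2 := by omega
            rcases hdichQ with hQcl | hQind
            · exact absurd hQcl (hU2 q hQn)
            · have hQ3 : 3 ≤ (twinClass G q).ncard := by omega
              exact join_case hG hn h9 (nontwin_symm hpq) hQind hQ3 hP2 hcross'
      · exfalso
        have hclosed : ∀ x ∈ twinClass G p, ∀ y, G.Adj x y → y ∈ twinClass G p := by
          intro x hx y hxy
          rcases hcover y with h | h
          · exact h
          · exact absurd ((hcross_iff x hx y h).mp hxy) hpqadj
        exact closed_not_reachable hclosed (mem_twinClass_self p)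
          (fun h => hdisj q h (mem_twinClass_self q)) (hG.preconnected p q)
  by_cases hC0 : ∃ v, BigT G v
  · obtain ⟨p, hBp⟩ := hC0
    have hnonB : ∀ z, z ∉ twinClass G p → ¬BigT G z := by
      intro z hz hBz
      exact hB ⟨p, z, hz, hBp, hBz⟩
    by_cases hdone : n - 2 ∈ locSet G
    · exact hdone
    exfalso
    have hptriple : ∀ z1 z2 : V, z1 ∉ twinClass G p → z2 ∉ twinClass G p → z1 ≠ z2 →
        (∃ x ∈ Dset G p z1, x ≠ z2) → (∃ x ∈ Dset G p z2, x ≠ z1) → False := by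
      intro z1 z2 h1 h2 h12 w1 w2
      have hpz1 : ¬IsTwin G p z1 := h1
      have hpz2 : ¬IsTwin G p z2 := h2
      have hz12 : ¬IsTwin G z1 z2 := by
        intro ht
        exact hnonB z1 h1 ⟨z2, h12.symm, ht⟩
      exact hdone (triple_locSet hG hn h9 (nontwin_ne hpz1) (nontwin_ne hpz2) h12 w1 w2
        (safe_big hG hz12 hBp (nontwin_symm hpz1) (nontwin_symm hpz2)))
    have hfail : ∀ z1 z2 : V, z1 ∉ twinClass G p → z2 ∉ twinClass G p → z1 ≠ z2 →
        (∀ x ∈ Dset G p z1, x = z2) ∨ (∀ x ∈ Dset G p z2, x = z1) := by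
      intro z1 z2 h1 h2 h12
      by_contra hcon
      push_neg at hcon
      obtain ⟨⟨x1, hx1, hx1'⟩, ⟨x2, hx2, hx2'⟩⟩ := hcon
      exact hptriple z1 z2 h1 h2 h12 ⟨x1, hx1, hx1'⟩ ⟨x2, hx2, hx2'⟩
    have huniq : ∀ z w w' : V, z ∉ twinClass G p → (∀ x ∈ Dset G p z, x = w) →
        (∀ x ∈ Dset G p z, x = w') → w = w' := by
      intro z w w' hz hw hw'
      obtain ⟨x, hx⟩ := Dset_nonempty hG (hz : ¬IsTwin G p z)
      rw [← hw x hx, ← hw' x hx]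
    by_cases h4 : ∃ z1 z2 z3 z4 : V, z1 ∉ twinClass G p ∧ z2 ∉ twinClass G p ∧
        z3 ∉ twinClass G p ∧ z4 ∉ twinClass G p ∧
        z1 ≠ z2 ∧ z1 ≠ z3 ∧ z1 ≠ z4 ∧ z2 ≠ z3 ∧ z2 ≠ z4 ∧ z3 ≠ z4
    · obtain ⟨z1, z2, z3, z4, m1, m2, m3, m4, d12, d13, d14, d23, d24, d34⟩ := h4
      rcases hfail z1 z2 m1 m2 d12 with h12 | h21
      · have h31 : ∀ x ∈ Dset G p z3, x = z1 := by
          rcases hfail z1 z3 m1 m3 d13 with h | h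
          · exact absurd (huniq z1 z2 z3 m1 h12 h) d23
          · exact h
        have h41 : ∀ x ∈ Dset G p z4, x = z1 := by
          rcases hfail z1 z4 m1 m4 d14 with h | h
          · exact absurd (huniq z1 z2 z4 m1 h12 h) d24
          · exact h
        rcases hfail z3 z4 m3 m4 d34 with h | h
        · exact d14 (huniq z3 z1 z4 m3 h31 h)
        · exact d13 (huniq z4 z1 z3 m4 h41 h)
      · rcases hfail z1 z3 m1 m3 d13 with h13 | h31
        · have h41 : ∀ x ∈ Dset G p z4, x = z1 := by
            rcases hfail z1 z4 m1 m4 d14 with h | h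
            · exact absurd (huniq z1 z3 z4 m1 h13 h) d34
            · exact h
          rcases hfail z2 z4 m2 m4 d24 with h | h
          · exact d14 (huniq z2 z1 z4 m2 h21 h)
          · exact d12 (huniq z4 z1 z2 m4 h41 h)
        · rcases hfail z2 z3 m2 m3 d23 with h | h
          · exact d13 (huniq z2 z1 z3 m2 h21 h)
          · exact d12 (huniq z3 z1 z2 m3 h31 h)
    by_cases h3 : ∃ z1 z2 z3 : V, z1 ∉ twinClass G p ∧ z2 ∉ twinClass G p ∧
        z3 ∉ twinClass G p ∧ z1 ≠ z2 ∧ z1 ≠ z3 ∧ z2 ≠ z3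
    · obtain ⟨z1, z2, z3, m1, m2, m3, d12, d13, d23⟩ := h3
      have hcover3 : ∀ v : V, IsTwin G p v ∨ v = z1 ∨ v = z2 ∨ v = z3 := by
        intro v
        by_cases hv : v ∈ twinClass G p
        · exact Or.inl hv
        · right
          by_contra hc
          push_neg at hc
          exact h4 ⟨z1, z2, z3, v, m1, m2, m3, hv, d12, d13, Ne.symm hc.1, d23,
            Ne.symm hc.2.1, Ne.symm hc.2.2⟩
      obtain ⟨p', hp'ne', hp't⟩ := hBp
      have cyc : ∀ za zb zc : V, za ∉ twinClass G p → zb ∉ twinClass G p →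
          zc ∉ twinClass G p → za ≠ zb → za ≠ zc → zb ≠ zc →
          (∀ v : V, IsTwin G p v ∨ v = za ∨ v = zb ∨ v = zc) →
          (∀ x ∈ Dset G p za, x = zb) → (∀ x ∈ Dset G p zb, x = zc) →
          (∀ x ∈ Dset G p zc, x = za) → False := by
        intro za zb zc ma mb mc dab dac dbc hcov ha hb hc
        exact cycle_case hG hp'ne' hp't ma mb mc dab dac dbc hcov ha hb hc
      rcases hfail z1 z2 m1 m2 d12 with h12 | h21
      · rcases hfail z2 z3 m2 m3 d23 with h23 | h32
        · have h31 : ∀ x ∈ Dset G p z3, x = z1 := by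
            rcases hfail z1 z3 m1 m3 d13 with h | h
            · exact absurd (huniq z1 z2 z3 m1 h12 h) d23
            · exact h
          exact cyc z1 z2 z3 m1 m2 m3 d12 d13 d23 hcover3 h12 h23 h31
        · rcases hfail z1 z3 m1 m3 d13 with h13 | h31
          · exact absurd (huniq z1 z2 z3 m1 h12 h13) d23
          · exact (Ne.symm d12) (huniq z3 z2 z1 m3 h32 h31)
      · rcases hfail z1 z3 m1 m3 d13 with h13 | h31
        · have h32 : ∀ x ∈ Dset G p z3, x = z2 := by
            rcases hfail z2 z3 m2 m3 d23 with h | h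
            · exact absurd (huniq z2 z1 z3 m2 h21 h) d13
            · exact h
          have hcov' : ∀ v : V, IsTwin G p v ∨ v = z1 ∨ v = z3 ∨ v = z2 := by
            intro v
            rcases hcover3 v with h | h | h | h
            · exact Or.inl h
            · exact Or.inr (Or.inl h)
            · exact Or.inr (Or.inr (Or.inr h))
            · exact Or.inr (Or.inr (Or.inl h))
          exact cyc z1 z3 z2 m1 m3 m2 d13 d12 (Ne.symm d23) hcov' h13 h32 h21
        · rcases hfail z2 z3 m2 m3 d23 with h | h
          · exact d13 (huniq z2 z1 z3 m2 h21 h)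
          · exact d12 (huniq z3 z1 z2 m3 h31 h)
    by_cases h2c : ∃ z1 z2 : V, z1 ∉ twinClass G p ∧ z2 ∉ twinClass G p ∧ z1 ≠ z2
    · obtain ⟨z1, z2, m1, m2, d12⟩ := h2c
      have hcov2 : ∀ v : V, v ∈ twinClass G p ∨ v = z1 ∨ v = z2 := by
        intro v
        by_cases hv : v ∈ twinClass G p
        · exact Or.inl hv
        · right
          by_contra hc
          push_neg at hc
          exact h3 ⟨z1, z2, v, m1, m2, hv, d12, Ne.symm hc.1, Ne.symm hc.2⟩
      have hPc : (twinClass G p)ᶜ = {z1, z2} := by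
        ext v
        constructor
        · intro hv
          rcases hcov2 v with h | h | h
          · exact absurd h hv
          · exact Or.inl h
          · exact Or.inr h
        · intro hv
          rcases hv with rfl | hv
          · exact m1
          · rw [Set.mem_singleton_iff] at hv; subst hv; exact m2
      have hPn : (twinClass G p).ncard = n - 2 := by
        have h1 := ncard_compl_eq (twinClass G p)
        rw [hPc, Set.ncard_pair d12, hn] at h1
        have h2 : (twinClass G p).ncard ≤ n := by
          calc (twinClass G p).ncard ≤ (Set.univ : Set V).ncard :=
                Set.ncard_le_ncard (Set.subset_univ _) (Set.toFinite _)
            _ = n := by rw [Set.ncard_univ, Nat.card_eq_fintype_card, hn]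
        omega
      have hPind : ∀ x ∈ twinClass G p, ∀ y ∈ twinClass G p, x ≠ y → ¬G.Adj x y := by
        by_cases hadjP : ∃ x ∈ twinClass G p, ∃ y ∈ twinClass G p, x ≠ y ∧ G.Adj x y
        · obtain ⟨x, hx, y, hy, hxy, hadj⟩ := hadjP
          exact absurd (clique_of_adj hx hy hxy hadj) (hU2 p hPn)
        · push_neg at hadjP
          exact hadjP
      have huni : ∀ z : V, z ∉ twinClass G p → ∀ x ∈ twinClass G p,
          (G.Adj x z ↔ G.Adj p z) := by
        intro z hz x hx
        have hzp : z ≠ p := fun h => hz (by rw [h]; exact mem_twinClass_self p)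
        have hzx : z ≠ x := fun h => hz (by rw [h]; exact hx)
        exact ((hx : IsTwin G p x).adj_iff hzp hzx).symm
      have hmid : ∀ za zb : V, za ∉ twinClass G p → zb ∉ twinClass G p → za ≠ zb →
          (∀ v : V, v ∈ twinClass G p ∨ v = za ∨ v = zb) →
          G.Adj p za → ¬G.Adj p zb → False := by
        intro za zb ma mb dab hcov hadja hnadjb
        by_cases hγ : G.Adj za zb
        · apply mb
          show IsTwin G p zb
          unfold IsTwin
          ext x
          simp only [Set.mem_diff, SimpleGraph.mem_neighborSet, Set.mem_singleton_iff]
          constructor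
          · rintro ⟨hadj, hxzb⟩
            rcases hcov x with hxP | rfl | rfl
            · exact absurd hadj (hPind p (mem_twinClass_self p) x hxP (G.ne_of_adj hadj))
            · exact ⟨hγ.symm, (G.ne_of_adj hadj).symm⟩
            · exact absurd rfl hxzb
          · rintro ⟨hadj, hxp⟩
            rcases hcov x with hxP | rfl | rfl
            · exact absurd ((huni zb mb x hxP).mp hadj.symm) hnadjb
            · exact ⟨hadja, dab⟩
            · exact absurd hadj G.irrefl
        · have hpzb : p ≠ zb := fun h => mb (by rw [← h]; exact mem_twinClass_self p)
          obtain ⟨t, ht⟩ := exists_adj hG (v := zb) (w0 := p) hpzb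
          rcases hcov t with htP | rfl | rfl
          · exact absurd ((huni zb mb t htP).mp ht.symm) hnadjb
          · exact hγ ht.symm
          · exact G.irrefl ht
      by_cases hα : G.Adj p z1
      · by_cases hβ : G.Adj p z2
        · have htw : IsTwin G z1 z2 := by
            unfold IsTwin
            ext x
            simp only [Set.mem_diff, SimpleGraph.mem_neighborSet, Set.mem_singleton_iff]
            constructor
            · rintro ⟨hadj, hxz2⟩
              have hxz1 : x ≠ z1 := (G.ne_of_adj hadj).symm
              rcases hcov2 x with hxP | rfl | rfl
              · exact ⟨((huni z2 m2 x hxP).mpr hβ).symm, hxz1⟩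
              · exact absurd hadj G.irrefl
              · exact absurd rfl hxz2
            · rintro ⟨hadj, hxz1⟩
              have hxz2 : x ≠ z2 := (G.ne_of_adj hadj).symm
              rcases hcov2 x with hxP | rfl | rfl
              · exact ⟨((huni z1 m1 x hxP).mpr hα).symm, hxz2⟩
              · exact absurd rfl hxz1
              · exact absurd hadj G.irrefl
          exact hnonB z1 m1 ⟨z2, Ne.symm d12, htw⟩
        · exact hmid z1 z2 m1 m2 d12 hcov2 hα hβ
      · by_cases hβ : G.Adj p z2
        · have hcov2' : ∀ v : V, v ∈ twinClass G p ∨ v = z2 ∨ v = z1 := by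
            intro v
            rcases hcov2 v with h | h | h
            · exact Or.inl h
            · exact Or.inr (Or.inr h)
            · exact Or.inr (Or.inl h)
          exact hmid z2 z1 m2 m1 (Ne.symm d12) hcov2' hβ hα
        · have hz1p : z1 ≠ p := fun h => m1 (by rw [h]; exact mem_twinClass_self p)
          obtain ⟨t, ht⟩ := exists_adj hG (v := p) (w0 := z1) hz1p
          rcases hcov2 t with htP | rfl | rfl
          · exact hPind p (mem_twinClass_self p) t htP (G.ne_of_adj ht) ht
          · exact hα ht
          · exact hβ ht
    · by_cases hz : ∃ z, z ∉ twinClass G p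
      · obtain ⟨z0, hz0⟩ := hz
        have hPc : (twinClass G p)ᶜ = {z0} := by
          ext v
          constructor
          · intro hv
            by_contra hne
            exact h2c ⟨v, z0, hv, hz0, hne⟩
          · intro hv
            rw [Set.mem_singleton_iff] at hv; subst hv; exact hz0
        have h1 := ncard_compl_eq (twinClass G p)
        rw [hPc, Set.ncard_singleton, hn] at h1
        have h2 : (twinClass G p).ncard ≤ n := by
          calc (twinClass G p).ncard ≤ (Set.univ : Set V).ncard :=
                Set.ncard_le_ncard (Set.subset_univ _) (Set.toFinite _)
            _ = n := by rw [Set.ncard_univ, Nat.card_eq_fintype_card, hn]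
        exact hU1 p (by omega)
      · push_neg at hz
        exact hnt0 (twins_of_mem_twinClass (hz a0) (hz b0))
  · push_neg at hC0
    have hcard6 : 6 ≤ (Finset.univ : Finset V).card := by
      rw [Finset.card_univ, hn]; omega
    obtain ⟨S, hSsub, hScard⟩ := Finset.exists_subset_card_eq hcard6
    have hntS : ∀ a ∈ S, ∀ b ∈ S, a ≠ b → ¬IsTwin G a b := by
      intro a _ b _ hab ht
      exact hC0 a ⟨b, hab.symm, ht⟩
    obtain ⟨a, b, c, _, _, _, hab, hac, hbc, w1, w2, w3⟩ := six_set_triple hG hScard hntS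
    exact triple_locSet hG hn h9 hab hac hbc w1 w2 w3

end Construct
/-- For a connected graph `G` of order `n ≥ 9`: `β_p(G) = n - 1` iff either
`τ(G) = n - 1`, or `τ(G) = n - 2` and some twin class of cardinality `n - 2`
induces a complete subgraph. -/
theorem partitionDim_eq_order_sub_one_iff {V : Type*} [Fintype V]
    (G : SimpleGraph V) (hG : G.Connected) (n : ℕ) (hn : Fintype.card V = n)
    (h9 : 9 ≤ n) :
    partitionDim G = n - 1 ↔
      (twinNumber G = n - 1 ∨
        (twinNumber G = n - 2 ∧ ∃ u : V, (twinClass G u).ncard = n - 2 ∧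
          ∀ v ∈ twinClass G u, ∀ w ∈ twinClass G u, v ≠ w → G.Adj v w)) := by
  haveI hNeV : Nonempty V := Fintype.card_pos_iff.mp (by omega)
  constructor
  · intro h
    obtain ⟨h1, h2⟩ := (key_iff hG hn h9).mp h
    by_contra hQ
    push_neg at hQ
    obtain ⟨hQ1, hQ2⟩ := hQ
    by_cases hex : ∃ a b : V, ¬IsTwin G a b
    · -- construct a locating partition with n-2 parts, contradiction with h2
      obtain ⟨a0, b0, hnt0⟩ := hex
      -- twinNumber is attained and < n
      obtain ⟨u', hu'⟩ := exists_twinClass_eq_twinNumber (G := G)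
      have hτlt : twinNumber G < n := by
        have := twinClass_ncard_lt hnt0 u'
        rw [hu', hn] at this
        exact this
      have hU1 : ∀ u : V, (twinClass G u).ncard ≠ n - 1 := by
        intro u hcard
        apply hQ1
        have hge : n - 1 ≤ twinNumber G := hcard ▸ le_twinNumber u
        omega
      have hU2 : ∀ u : V, (twinClass G u).ncard = n - 2 →
          ¬(∀ v ∈ twinClass G u, ∀ w ∈ twinClass G u, v ≠ w → G.Adj v w) := by
        intro u hcard hclique
        have hτ : twinNumber G = n - 2 := by
          have hge : n - 2 ≤ twinNumber G := hcard ▸ le_twinNumber u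
          have hne1 : twinNumber G ≠ n - 1 := by
            intro hτ1
            exact hU1 u' (by rw [hu', hτ1])
          omega
        obtain ⟨v, hv, w, hw, hvw, hnadj⟩ := hQ2 hτ u hcard
        exact hnadj (hclique v hv w hw hvw)
      exact h2 (construct hG hn h9 ⟨a0, b0, hnt0⟩ hU1 hU2)
    · -- all pairs are twins: no locating partition of size n-1 exists
      push_neg at hex
      obtain ⟨P, hL, hcard⟩ := h1
      have hlt : P.ncard < Fintype.card V := by rw [hcard, hn]; omega
      obtain ⟨S, hS, x, hx, y, hy, hxy⟩ := exists_nonsingleton_part hL.1 hlt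
      exact hxy (twin_same_part hG hL (hex x y) hS hx hy)
  · intro hQ
    apply (key_iff hG hn h9).mpr
    rcases hQ with hQ1 | ⟨hτ, u, hcard, hclique⟩
    · obtain ⟨u, hu⟩ := exists_twinClass_eq_twinNumber (G := G)
      exact backward_case1 hG hn h9 (hu.trans hQ1)
    · exact backward_case2 hG hn h9 hcard hclique
end
end

section
/- Let G be a connected simple graph of order n ≥ 4. Then τ(G) = n−2 if and only if G is isomorphic to one of the following four graphs: (a) the complete split graph K_{n−2} ∨ \overline{K_2} (the complete graph K_n minus one edge); (b) the graph K_1 ∨ (K_1 + K_{n−2}) (the complete graph K_{n−1} with one pendant leaf attached); (c) the complete bipartite graph K_{2,n−2}; (d) the complete split graph \overline{K_{n−2}} ∨ K_2. -/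
open Classical SimpleGraph

noncomputable section

/-- The disjoint union of two graphs. -/
def graphSum {α β : Type*} (G : SimpleGraph α) (H : SimpleGraph β) :
    SimpleGraph (α ⊕ β) where
  Adj x y :=
    match x, y with
    | Sum.inl a, Sum.inl b => G.Adj a b
    | Sum.inr a, Sum.inr b => H.Adj a b
    | _, _ => False
  symm := by
    constructor
    rintro (a|a) (b|b) h
    · exact G.adj_symm h
    · exact h.elim
    · exact h.elim
    · exact H.adj_symm h
  loopless := by
    constructor
    rintro (a|a) h
    · exact G.irrefl h
    · exact H.irrefl h

/-- The join of two graphs: disjoint union plus all edges between the two sides. -/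
def graphJoin {α β : Type*} (G : SimpleGraph α) (H : SimpleGraph β) :
    SimpleGraph (α ⊕ β) where
  Adj x y :=
    match x, y with
    | Sum.inl a, Sum.inl b => G.Adj a b
    | Sum.inr a, Sum.inr b => H.Adj a b
    | _, _ => True
  symm := by
    constructor
    rintro (a|a) (b|b) h
    · exact G.adj_symm h
    · trivial
    · trivial
    · exact H.adj_symm h
  loopless := by
    constructor
    rintro (a|a) h
    · exact G.irrefl h
    · exact H.irrefl h

section TwinHelpers
variable {V V' : Type*}

lemma isTwin_refl (G : SimpleGraph V) (u : V) : IsTwin G u u := rfl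

lemma isTwin_iff' (G : SimpleGraph V) (u v : V) :
    IsTwin G u v ↔ ∀ z, z ≠ u → z ≠ v → (G.Adj u z ↔ G.Adj v z) := by
  constructor
  · intro h z hzu hzv
    have := Set.ext_iff.mp h z
    simpa [SimpleGraph.mem_neighborSet, hzu, hzv] using this
  · intro h
    ext z
    simp only [Set.mem_diff, SimpleGraph.mem_neighborSet, Set.mem_singleton_iff]
    constructor
    · rintro ⟨hadj, hzv⟩
      have hzu : z ≠ u := fun e => G.loopless.irrefl u (e ▸ hadj)
      exact ⟨(h z hzu hzv).mp hadj, hzu⟩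
    · rintro ⟨hadj, hzu⟩
      have hzv : z ≠ v := fun e => G.loopless.irrefl v (e ▸ hadj)
      exact ⟨(h z hzu hzv).mpr hadj, hzv⟩

lemma isTwin_symm {G : SimpleGraph V} {u v : V} (h : IsTwin G u v) : IsTwin G v u := by
  rw [isTwin_iff'] at h ⊢
  exact fun z hzv hzu => (h z hzu hzv).symm

lemma isTwin_trans {G : SimpleGraph V} {u v w : V} (h1 : IsTwin G u v) (h2 : IsTwin G v w) :
    IsTwin G u w := by
  rcases eq_or_ne u v with rfl | huv; · exact h2
  rcases eq_or_ne v w with rfl | hvw; · exact h1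
  rcases eq_or_ne u w with rfl | huw; · exact isTwin_refl G u
  rw [isTwin_iff'] at h1 h2 ⊢
  intro z hzu hzw
  rcases eq_or_ne z v with rfl | hzv
  · constructor
    · intro h
      have h3 : G.Adj w u := (h2 u huv huw).mp h.symm
      exact ((h1 w huw.symm hvw.symm).mp h3.symm).symm
    · intro h
      have h3 : G.Adj u w := (h1 w huw.symm hvw.symm).mpr h.symm
      exact ((h2 u huv huw).mpr h3.symm).symm
  · exact (h1 z hzu hzv).trans (h2 z hzv hzw)

lemma isTwin_map {G : SimpleGraph V} {H : SimpleGraph V'} (e : G ≃g H) (u v : V) :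
    IsTwin H (e u) (e v) ↔ IsTwin G u v := by
  rw [isTwin_iff', isTwin_iff']
  constructor
  · intro h z hzu hzv
    rw [← e.map_rel_iff, ← e.map_rel_iff]
    exact h (e z) (fun hh => hzu (e.injective hh)) (fun hh => hzv (e.injective hh))
  · intro h z hzu hzv
    obtain ⟨w, rfl⟩ := e.surjective z
    rw [e.map_rel_iff, e.map_rel_iff]
    exact h w (fun hh => hzu (congrArg e hh)) (fun hh => hzv (congrArg e hh))

lemma twinClass_map {G : SimpleGraph V} {H : SimpleGraph V'} (e : G ≃g H) (u : V) :
    twinClass H (e u) = e '' twinClass G u := by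
  ext z
  constructor
  · intro hz
    obtain ⟨w, rfl⟩ := e.surjective z
    exact ⟨w, (isTwin_map e u w).mp hz, rfl⟩
  · rintro ⟨w, hw, rfl⟩
    exact (isTwin_map e u w).mpr hw

lemma twinNumber_congr {G : SimpleGraph V} {H : SimpleGraph V'} (e : G ≃g H) :
    twinNumber G = twinNumber H := by
  unfold twinNumber
  congr 1
  ext k
  constructor
  · rintro ⟨u, rfl⟩
    exact ⟨e u, by rw [twinClass_map e u, Set.ncard_image_of_injective _ e.injective]⟩
  · rintro ⟨u, rfl⟩
    obtain ⟨w, rfl⟩ := e.surjective u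
    exact ⟨w, by rw [twinClass_map e w, Set.ncard_image_of_injective _ e.injective]⟩

lemma twinNumber_eq_of {G : SimpleGraph V} {m : ℕ} (u0 : V)
    (h0 : (twinClass G u0).ncard = m) (hub : ∀ u : V, (twinClass G u).ncard ≤ m) :
    twinNumber G = m := by
  unfold twinNumber
  apply le_antisymm
  · exact csSup_le ⟨m, u0, h0⟩ (by rintro k ⟨u, rfl⟩; exact hub u)
  · exact le_csSup ⟨m, by rintro k ⟨u, rfl⟩; exact hub u⟩ ⟨u0, h0⟩

lemma exists_twinClass_ncard_eq [Finite V] [Nonempty V] (G : SimpleGraph V) :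
    ∃ u : V, (twinClass G u).ncard = twinNumber G := by
  have h : {k | ∃ u : V, (twinClass G u).ncard = k} = Set.range (fun u : V => (twinClass G u).ncard) := by
    ext k; simp [eq_comm, Set.range]
  have := Set.Nonempty.csSup_mem (s := {k | ∃ u : V, (twinClass G u).ncard = k})
    ⟨_, Classical.arbitrary V, rfl⟩ (by rw [h]; exact Set.finite_range _)
  exact this

end TwinHelpers

section AdjLemmas
variable {α β : Type*} (G : SimpleGraph α) (H : SimpleGraph β)

@[simp] lemma graphJoin_adj_inl_inl (a b : α) :
    (graphJoin G H).Adj (.inl a) (.inl b) ↔ G.Adj a b := Iff.rfl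
@[simp] lemma graphJoin_adj_inr_inr (a b : β) :
    (graphJoin G H).Adj (.inr a) (.inr b) ↔ H.Adj a b := Iff.rfl
@[simp] lemma graphJoin_adj_inl_inr (a : α) (b : β) :
    (graphJoin G H).Adj (.inl a) (.inr b) := trivial
@[simp] lemma graphJoin_adj_inr_inl (a : β) (b : α) :
    (graphJoin G H).Adj (.inr a) (.inl b) := trivial
@[simp] lemma graphSum_adj_inl_inl (a b : α) :
    (graphSum G H).Adj (.inl a) (.inl b) ↔ G.Adj a b := Iff.rfl
@[simp] lemma graphSum_adj_inr_inr (a b : β) :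
    (graphSum G H).Adj (.inr a) (.inr b) ↔ H.Adj a b := Iff.rfl
@[simp] lemma graphSum_adj_inl_inr (a : α) (b : β) :
    ¬ (graphSum G H).Adj (.inl a) (.inr b) := id
@[simp] lemma graphSum_adj_inr_inl (a : β) (b : α) :
    ¬ (graphSum G H).Adj (.inr a) (.inl b) := id

end AdjLemmas

lemma ncard_range_sum_inl {α β : Type*} [Fintype α] :
    (Set.range (Sum.inl : α → α ⊕ β)).ncard = Fintype.card α := by
  rw [← Nat.card_coe_set_eq, Nat.card_range_of_injective Sum.inl_injective,
    Nat.card_eq_fintype_card]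

lemma ncard_range_sum_inr {α β : Type*} [Fintype β] :
    (Set.range (Sum.inr : β → α ⊕ β)).ncard = Fintype.card β := by
  rw [← Nat.card_coe_set_eq, Nat.card_range_of_injective Sum.inr_injective,
    Nat.card_eq_fintype_card]
section Computations

-- Case (a): K_m ∨ K̄_2
lemma tnA (m : ℕ) (hm : 2 ≤ m) :
    twinNumber (graphJoin (⊤ : SimpleGraph (Fin m)) (⊥ : SimpleGraph (Fin 2))) = m := by
  set G' := graphJoin (⊤ : SimpleGraph (Fin m)) (⊥ : SimpleGraph (Fin 2)) with hG'
  have key1 : ∀ a b : Fin m, IsTwin G' (.inl a) (.inl b) := by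
    intro a b
    rw [isTwin_iff']
    rintro (c | j) hz1 hz2
    · simp only [ne_eq, Sum.inl.injEq] at hz1 hz2
      simp only [hG', graphJoin_adj_inl_inl, top_adj, ne_eq]
      exact ⟨fun _ => fun e => hz2 e.symm, fun _ => fun e => hz1 e.symm⟩
    · simp [hG']
  have key2 : ∀ (a : Fin m) (i : Fin 2), ¬ IsTwin G' (.inl a) (.inr i) := by
    intro a i h
    rw [isTwin_iff'] at h
    obtain ⟨j, hj⟩ := exists_ne i
    have := h (.inr j) (by simp) (by simpa using hj)
    simp [hG'] at this
  have hclass1 : ∀ a : Fin m, twinClass G' (.inl a) = Set.range Sum.inl := by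
    intro a; ext z
    show IsTwin G' (.inl a) z ↔ _
    cases z with
    | inl b => simp only [Set.mem_range]
               exact ⟨fun _ => ⟨b, rfl⟩, fun _ => key1 a b⟩
    | inr i => simp only [Set.mem_range]
               exact ⟨fun h => absurd h (key2 a i), fun ⟨c, hc⟩ => by simp at hc⟩
  have hclass2 : ∀ i : Fin 2, twinClass G' (.inr i) ⊆ Set.range Sum.inr := by
    rintro i (a | j) hz
    · exact absurd (isTwin_symm hz) (key2 a i)
    · exact ⟨j, rfl⟩
  apply twinNumber_eq_of (Sum.inl ⟨0, by omega⟩)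
  · rw [hclass1, ncard_range_sum_inl, Fintype.card_fin]
  · rintro (a | i)
    · rw [hclass1, ncard_range_sum_inl, Fintype.card_fin]
    · refine le_trans (Set.ncard_le_ncard (hclass2 i) (Set.toFinite _)) ?_
      rw [ncard_range_sum_inr, Fintype.card_fin]; omega

-- Case (d): K̄_m ∨ K_2
lemma tnD (m : ℕ) (hm : 2 ≤ m) :
    twinNumber (graphJoin (⊥ : SimpleGraph (Fin m)) (⊤ : SimpleGraph (Fin 2))) = m := by
  set G' := graphJoin (⊥ : SimpleGraph (Fin m)) (⊤ : SimpleGraph (Fin 2)) with hG'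
  haveI : Nontrivial (Fin m) := by
    have : 1 < m := by omega
    exact Fin.nontrivial_iff_two_le.mpr hm
  have key1 : ∀ a b : Fin m, IsTwin G' (.inl a) (.inl b) := by
    intro a b
    rw [isTwin_iff']
    rintro (c | j) hz1 hz2
    · simp [hG']
    · simp [hG']
  have key2 : ∀ (a : Fin m) (i : Fin 2), ¬ IsTwin G' (.inl a) (.inr i) := by
    intro a i h
    rw [isTwin_iff'] at h
    obtain ⟨b, hb⟩ := exists_ne a
    have := h (.inl b) (by simpa using hb) (by simp)
    simp [hG'] at this
  have hclass1 : ∀ a : Fin m, twinClass G' (.inl a) = Set.range Sum.inl := by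
    intro a; ext z
    show IsTwin G' (.inl a) z ↔ _
    cases z with
    | inl b => simp only [Set.mem_range]
               exact ⟨fun _ => ⟨b, rfl⟩, fun _ => key1 a b⟩
    | inr i => simp only [Set.mem_range]
               exact ⟨fun h => absurd h (key2 a i), fun ⟨c, hc⟩ => by simp at hc⟩
  have hclass2 : ∀ i : Fin 2, twinClass G' (.inr i) ⊆ Set.range Sum.inr := by
    rintro i (a | j) hz
    · exact absurd (isTwin_symm hz) (key2 a i)
    · exact ⟨j, rfl⟩
  apply twinNumber_eq_of (Sum.inl ⟨0, by omega⟩)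
  · rw [hclass1, ncard_range_sum_inl, Fintype.card_fin]
  · rintro (a | i)
    · rw [hclass1, ncard_range_sum_inl, Fintype.card_fin]
    · refine le_trans (Set.ncard_le_ncard (hclass2 i) (Set.toFinite _)) ?_
      rw [ncard_range_sum_inr, Fintype.card_fin]; omega

-- Case (c): K_{2,m}
lemma tnC (m : ℕ) (hm : 2 ≤ m) :
    twinNumber (completeBipartiteGraph (Fin 2) (Fin m)) = m := by
  set G' := completeBipartiteGraph (Fin 2) (Fin m) with hG'
  have key1 : ∀ a b : Fin m, IsTwin G' (.inr a) (.inr b) := by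
    intro a b
    rw [isTwin_iff']
    rintro (i | c) hz1 hz2 <;> simp [hG', completeBipartiteGraph]
  have key2 : ∀ (a : Fin m) (i : Fin 2), ¬ IsTwin G' (.inr a) (.inl i) := by
    intro a i h
    rw [isTwin_iff'] at h
    obtain ⟨j, hj⟩ := exists_ne i
    have := h (.inl j) (by simp) (by simpa using hj)
    simp [hG', completeBipartiteGraph] at this
  have hclass1 : ∀ a : Fin m, twinClass G' (.inr a) = Set.range Sum.inr := by
    intro a; ext z
    show IsTwin G' (.inr a) z ↔ _
    cases z with
    | inl i => simp only [Set.mem_range]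
               exact ⟨fun h => absurd h (key2 a i), fun ⟨c, hc⟩ => by simp at hc⟩
    | inr b => simp only [Set.mem_range]
               exact ⟨fun _ => ⟨b, rfl⟩, fun _ => key1 a b⟩
  have hclass2 : ∀ i : Fin 2, twinClass G' (.inl i) ⊆ Set.range Sum.inl := by
    rintro i (j | a) hz
    · exact ⟨j, rfl⟩
    · exact absurd (isTwin_symm hz) (key2 a i)
  apply twinNumber_eq_of (Sum.inr (⟨0, by omega⟩ : Fin m))
  · rw [hclass1, ncard_range_sum_inr, Fintype.card_fin]
  · rintro (i | a)
    · refine le_trans (Set.ncard_le_ncard (hclass2 i) (Set.toFinite _)) ?_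
      rw [ncard_range_sum_inl, Fintype.card_fin]; omega
    · rw [hclass1, ncard_range_sum_inr, Fintype.card_fin]

-- Case (b): K_1 ∨ (K_1 + K_m)
lemma tnB (m : ℕ) (hm : 2 ≤ m) :
    twinNumber (graphJoin (⊤ : SimpleGraph (Fin 1))
      (graphSum (⊤ : SimpleGraph (Fin 1)) (⊤ : SimpleGraph (Fin m)))) = m := by
  set G' := graphJoin (⊤ : SimpleGraph (Fin 1))
      (graphSum (⊤ : SimpleGraph (Fin 1)) (⊤ : SimpleGraph (Fin m))) with hG'
  haveI : Nontrivial (Fin m) := Fin.nontrivial_iff_two_le.mpr hm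
  have key1 : ∀ a b : Fin m, IsTwin G' (.inr (.inr a)) (.inr (.inr b)) := by
    intro a b
    rw [isTwin_iff']
    rintro (i | (j | c)) hz1 hz2
    · simp [hG']
    · simp [hG']
    · simp only [ne_eq, Sum.inr.injEq, Sum.inl.injEq] at hz1 hz2
      simp only [hG', graphJoin_adj_inr_inr, graphSum_adj_inr_inr, top_adj, ne_eq]
      constructor
      · intro _ e; exact hz2 (by rw [e])
      · intro _ e; exact hz1 (by rw [e])
  -- X = inl 0 is not a twin of W-vertices (witness: Y)
  have keyXW : ∀ (i : Fin 1) (a : Fin m), ¬ IsTwin G' (.inl i) (.inr (.inr a)) := by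
    intro i a h
    rw [isTwin_iff'] at h
    have := h (.inr (.inl 0)) (by simp) (by simp)
    simp [hG'] at this
  -- Y = inr (inl 0) is not a twin of W-vertices (witness: another W vertex)
  have keyYW : ∀ (j : Fin 1) (a : Fin m), ¬ IsTwin G' (.inr (.inl j)) (.inr (.inr a)) := by
    intro j a h
    rw [isTwin_iff'] at h
    obtain ⟨b, hb⟩ := exists_ne a
    have := h (.inr (.inr b)) (by simp) (by simpa using hb)
    simp [hG'] at this
    exact hb this.symm
  -- X not twin of Y
  have keyXY : ∀ (i j : Fin 1), ¬ IsTwin G' (.inl i) (.inr (.inl j)) := by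
    intro i j h
    rw [isTwin_iff'] at h
    have := h (.inr (.inr ⟨0, by omega⟩)) (by simp) (by simp)
    simp [hG'] at this
  have hclass1 : ∀ a : Fin m,
      twinClass G' (.inr (.inr a)) =
        Set.range (fun b : Fin m => (Sum.inr (Sum.inr b) : Fin 1 ⊕ Fin 1 ⊕ Fin m)) := by
    intro a; ext z
    show IsTwin G' (.inr (.inr a)) z ↔ _
    rcases z with i | j | b
    · simp only [Set.mem_range]
      exact ⟨fun h => absurd (isTwin_symm h) (keyXW i a), fun ⟨c, hc⟩ => by simp at hc⟩
    · simp only [Set.mem_range]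
      exact ⟨fun h => absurd (isTwin_symm h) (keyYW j a), fun ⟨c, hc⟩ => by simp at hc⟩
    · simp only [Set.mem_range]
      exact ⟨fun _ => ⟨b, rfl⟩, fun _ => key1 a b⟩
  have hinj : Function.Injective (fun b : Fin m => (Sum.inr (Sum.inr b) : Fin 1 ⊕ Fin 1 ⊕ Fin m)) :=
    fun b c h => by simpa using h
  have hrange : (Set.range (fun b : Fin m =>
      (Sum.inr (Sum.inr b) : Fin 1 ⊕ Fin 1 ⊕ Fin m))).ncard = m := by
    rw [← Nat.card_coe_set_eq, Nat.card_range_of_injective hinj,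
      Nat.card_eq_fintype_card, Fintype.card_fin]
  apply twinNumber_eq_of (Sum.inr (Sum.inr (⟨0, by omega⟩ : Fin m)))
  · rw [hclass1, hrange]
  · rintro (i | j | a)
    · have hsub : twinClass G' (.inl i) ⊆ {Sum.inl i} := by
        rintro (i' | j' | b) hz
        · simp [Subsingleton.elim i' i]
        · exact absurd hz (keyXY i j')
        · exact absurd hz (keyXW i b)
      refine le_trans (Set.ncard_le_ncard hsub (Set.toFinite _)) ?_
      rw [Set.ncard_singleton]; omega
    · have hsub : twinClass G' (.inr (.inl j)) ⊆ {Sum.inr (Sum.inl j)} := by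
        rintro (i' | j' | b) hz
        · exact absurd (isTwin_symm hz) (keyXY i' j)
        · simp [Subsingleton.elim j' j]
        · exact absurd hz (keyYW j b)
      refine le_trans (Set.ncard_le_ncard hsub (Set.toFinite _)) ?_
      rw [Set.ncard_singleton]; omega
    · rw [hclass1, hrange]

end Computations
section ForwardCases
variable {V : Type*}

lemma card_coe_set (W : Set V) [Fintype ↥W] : Fintype.card ↥W = W.ncard := by
  rw [Set.ncard_eq_toFinset_card', Set.toFinset_card]

lemma caseA [Fintype V] (G : SimpleGraph V) (W : Set V) (m : ℕ) (hWm : W.ncard = m)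
    (hCm : (Wᶜ).ncard = 2)
    (hclq : ∀ w ∈ W, ∀ w' ∈ W, w ≠ w' → G.Adj w w')
    (hadj : ∀ w ∈ W, ∀ z, z ∉ W → G.Adj w z)
    (hnadj : ∀ z, z ∉ W → ∀ z', z' ∉ W → ¬ G.Adj z z') :
    Nonempty (G ≃g graphJoin (⊤ : SimpleGraph (Fin m)) (⊥ : SimpleGraph (Fin 2))) := by
  classical
  haveI : Fintype ↥W := Fintype.ofFinite _
  haveI : Fintype ↥(Wᶜ) := Fintype.ofFinite _
  have hcW : Fintype.card ↥W = m := by rw [card_coe_set, hWm]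
  have hcC : Fintype.card ↥(Wᶜ) = 2 := by rw [card_coe_set, hCm]
  let eW : ↥W ≃ Fin m := Fintype.equivFinOfCardEq hcW
  let eC : ↥(Wᶜ) ≃ Fin 2 := Fintype.equivFinOfCardEq hcC
  let g : V ≃ Fin m ⊕ Fin 2 := (Equiv.Set.sumCompl W).symm.trans (Equiv.sumCongr eW eC)
  have hgW : ∀ (v : V) (h : v ∈ W), g v = Sum.inl (eW ⟨v, h⟩) := by
    intro v h
    simp only [g, Equiv.trans_apply, Equiv.Set.sumCompl_symm_apply_of_mem h,
      Equiv.sumCongr_apply, Sum.map_inl]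
  have hgC : ∀ (v : V) (h : v ∉ W), g v = Sum.inr (eC ⟨v, h⟩) := by
    intro v h
    simp only [g, Equiv.trans_apply, Equiv.Set.sumCompl_symm_apply_of_notMem h,
      Equiv.sumCongr_apply, Sum.map_inr]
  refine ⟨⟨g, ?_⟩⟩
  intro a b
  by_cases ha : a ∈ W <;> by_cases hb : b ∈ W
  · rw [hgW a ha, hgW b hb]
    simp only [graphJoin_adj_inl_inl, top_adj, ne_eq]
    constructor
    · intro hne
      exact hclq a ha b hb (fun e => hne (congrArg eW (Subtype.ext e)))
    · intro hA e
      exact hA.ne (congrArg Subtype.val (eW.injective e))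
  · rw [hgW a ha, hgC b hb]
    exact iff_of_true (graphJoin_adj_inl_inr _ _ _ _) (hadj a ha b hb)
  · rw [hgC a ha, hgW b hb]
    exact iff_of_true (graphJoin_adj_inr_inl _ _ _ _) ((hadj b hb a ha).symm)
  · rw [hgC a ha, hgC b hb]
    exact iff_of_false (by simp) (hnadj a ha b hb)

end ForwardCases
section ForwardCases2
variable {V : Type*}

lemma caseD [Fintype V] (G : SimpleGraph V) (W : Set V) (m : ℕ) (hWm : W.ncard = m)
    (hCm : (Wᶜ).ncard = 2)
    (hind : ∀ w ∈ W, ∀ w' ∈ W, ¬ G.Adj w w')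
    (hadj : ∀ w ∈ W, ∀ z, z ∉ W → G.Adj w z)
    (hout : ∀ z, z ∉ W → ∀ z', z' ∉ W → z ≠ z' → G.Adj z z') :
    Nonempty (G ≃g graphJoin (⊥ : SimpleGraph (Fin m)) (⊤ : SimpleGraph (Fin 2))) := by
  classical
  haveI : Fintype ↥W := Fintype.ofFinite _
  haveI : Fintype ↥(Wᶜ) := Fintype.ofFinite _
  have hcW : Fintype.card ↥W = m := by rw [card_coe_set, hWm]
  have hcC : Fintype.card ↥(Wᶜ) = 2 := by rw [card_coe_set, hCm]
  let eW : ↥W ≃ Fin m := Fintype.equivFinOfCardEq hcW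
  let eC : ↥(Wᶜ) ≃ Fin 2 := Fintype.equivFinOfCardEq hcC
  let g : V ≃ Fin m ⊕ Fin 2 := (Equiv.Set.sumCompl W).symm.trans (Equiv.sumCongr eW eC)
  have hgW : ∀ (v : V) (h : v ∈ W), g v = Sum.inl (eW ⟨v, h⟩) := by
    intro v h
    simp only [g, Equiv.trans_apply, Equiv.Set.sumCompl_symm_apply_of_mem h,
      Equiv.sumCongr_apply, Sum.map_inl]
  have hgC : ∀ (v : V) (h : v ∉ W), g v = Sum.inr (eC ⟨v, h⟩) := by
    intro v h
    simp only [g, Equiv.trans_apply, Equiv.Set.sumCompl_symm_apply_of_notMem h,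
      Equiv.sumCongr_apply, Sum.map_inr]
  refine ⟨⟨g, ?_⟩⟩
  intro a b
  by_cases ha : a ∈ W <;> by_cases hb : b ∈ W
  · rw [hgW a ha, hgW b hb]
    exact iff_of_false (by simp) (hind a ha b hb)
  · rw [hgW a ha, hgC b hb]
    exact iff_of_true (graphJoin_adj_inl_inr _ _ _ _) (hadj a ha b hb)
  · rw [hgC a ha, hgW b hb]
    exact iff_of_true (graphJoin_adj_inr_inl _ _ _ _) ((hadj b hb a ha).symm)
  · rw [hgC a ha, hgC b hb]
    simp only [graphJoin_adj_inr_inr, top_adj, ne_eq]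
    constructor
    · intro hne
      exact hout a ha b hb (fun e => hne (congrArg eC (Subtype.ext e)))
    · intro hA e
      exact hA.ne (congrArg Subtype.val (eC.injective e))

lemma caseC [Fintype V] (G : SimpleGraph V) (W : Set V) (m : ℕ) (hWm : W.ncard = m)
    (hCm : (Wᶜ).ncard = 2)
    (hind : ∀ w ∈ W, ∀ w' ∈ W, ¬ G.Adj w w')
    (hadj : ∀ w ∈ W, ∀ z, z ∉ W → G.Adj w z)
    (hnadj : ∀ z, z ∉ W → ∀ z', z' ∉ W → ¬ G.Adj z z') :
    Nonempty (G ≃g completeBipartiteGraph (Fin 2) (Fin m)) := by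
  classical
  haveI : Fintype ↥W := Fintype.ofFinite _
  haveI : Fintype ↥(Wᶜ) := Fintype.ofFinite _
  have hcW : Fintype.card ↥W = m := by rw [card_coe_set, hWm]
  have hcC : Fintype.card ↥(Wᶜ) = 2 := by rw [card_coe_set, hCm]
  let eW : ↥W ≃ Fin m := Fintype.equivFinOfCardEq hcW
  let eC : ↥(Wᶜ) ≃ Fin 2 := Fintype.equivFinOfCardEq hcC
  let g : V ≃ Fin 2 ⊕ Fin m :=
    ((Equiv.Set.sumCompl W).symm.trans (Equiv.sumCongr eW eC)).trans (Equiv.sumComm _ _)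
  have hgW : ∀ (v : V) (h : v ∈ W), g v = Sum.inr (eW ⟨v, h⟩) := by
    intro v h
    simp only [g, Equiv.trans_apply, Equiv.Set.sumCompl_symm_apply_of_mem h,
      Equiv.sumCongr_apply, Sum.map_inl, Equiv.sumComm_apply, Sum.swap_inl]
  have hgC : ∀ (v : V) (h : v ∉ W), g v = Sum.inl (eC ⟨v, h⟩) := by
    intro v h
    simp only [g, Equiv.trans_apply, Equiv.Set.sumCompl_symm_apply_of_notMem h,
      Equiv.sumCongr_apply, Sum.map_inr, Equiv.sumComm_apply, Sum.swap_inr]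
  refine ⟨⟨g, ?_⟩⟩
  intro a b
  by_cases ha : a ∈ W <;> by_cases hb : b ∈ W
  · rw [hgW a ha, hgW b hb]
    exact iff_of_false (by simp [completeBipartiteGraph]) (hind a ha b hb)
  · rw [hgW a ha, hgC b hb]
    exact iff_of_true (by simp [completeBipartiteGraph]) (hadj a ha b hb)
  · rw [hgC a ha, hgW b hb]
    exact iff_of_true (by simp [completeBipartiteGraph]) ((hadj b hb a ha).symm)
  · rw [hgC a ha, hgC b hb]
    exact iff_of_false (by simp [completeBipartiteGraph]) (hnadj a ha b hb)

end ForwardCases2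
section ForwardCaseB
variable {V : Type*}

lemma caseB [Fintype V] (G : SimpleGraph V) (W : Set V) (m : ℕ) (hWm : W.ncard = m)
    (x y : V) (hxy : x ≠ y) (hC : Wᶜ = {x, y})
    (hclq : ∀ w ∈ W, ∀ w' ∈ W, w ≠ w' → G.Adj w w')
    (hadjx : ∀ w ∈ W, G.Adj w x)
    (hnadjy : ∀ w ∈ W, ¬ G.Adj w y)
    (hAxy : G.Adj x y) :
    Nonempty (G ≃g graphJoin (⊤ : SimpleGraph (Fin 1))
      (graphSum (⊤ : SimpleGraph (Fin 1)) (⊤ : SimpleGraph (Fin m)))) := by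
  classical
  have hxmem : x ∈ Wᶜ := by rw [hC]; simp
  have hymem : y ∈ Wᶜ := by rw [hC]; simp
  haveI : Fintype ↥W := Fintype.ofFinite _
  have hcW : Fintype.card ↥W = m := by rw [card_coe_set, hWm]
  let eW : ↥W ≃ Fin m := Fintype.equivFinOfCardEq hcW
  let eC : ↥(Wᶜ) ≃ Fin 2 :=
    { toFun := fun s => if (s : V) = x then 0 else 1
      invFun := fun i => if i = 0 then ⟨x, hxmem⟩ else ⟨y, hymem⟩
      left_inv := by
        rintro ⟨v, hv⟩
        rw [hC] at hv
        rcases hv with rfl | hv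
        · simp
        · rw [Set.mem_singleton_iff] at hv; subst hv
          simp [Ne.symm hxy]
      right_inv := by
        intro i
        fin_cases i
        · simp
        · simp [Ne.symm hxy] }
  let σ : (Fin m ⊕ Fin 2) ≃ (Fin 1 ⊕ (Fin 1 ⊕ Fin m)) :=
    { toFun := fun z => match z with
        | .inl a => .inr (.inr a)
        | .inr i => if i = 0 then .inl 0 else .inr (.inl 0)
      invFun := fun z => match z with
        | .inl _ => .inr 0
        | .inr (.inl _) => .inr 1
        | .inr (.inr a) => .inl a
      left_inv := by
        rintro (a | i)
        · rfl
        · fin_cases i <;> simp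
      right_inv := by
        rintro (j | j | a)
        · have : j = 0 := Subsingleton.elim _ _
          subst this; simp
        · have : j = 0 := Subsingleton.elim _ _
          subst this; simp
        · rfl }
  let g : V ≃ Fin 1 ⊕ (Fin 1 ⊕ Fin m) :=
    ((Equiv.Set.sumCompl W).symm.trans (Equiv.sumCongr eW eC)).trans σ
  have hgW : ∀ (v : V) (h : v ∈ W), g v = Sum.inr (Sum.inr (eW ⟨v, h⟩)) := by
    intro v h
    simp only [g, Equiv.trans_apply, Equiv.Set.sumCompl_symm_apply_of_mem h,
      Equiv.sumCongr_apply, Sum.map_inl]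
    rfl
  have hxW : x ∉ W := by rw [← Set.mem_compl_iff]; exact hxmem
  have hyW : y ∉ W := by rw [← Set.mem_compl_iff]; exact hymem
  have hgx : g x = Sum.inl 0 := by
    simp only [g, Equiv.trans_apply, Equiv.Set.sumCompl_symm_apply_of_notMem hxW,
      Equiv.sumCongr_apply, Sum.map_inr]
    show σ (Sum.inr (if x = x then 0 else 1)) = _
    simp [σ]
  have hgy : g y = Sum.inr (Sum.inl 0) := by
    simp only [g, Equiv.trans_apply, Equiv.Set.sumCompl_symm_apply_of_notMem hyW,
      Equiv.sumCongr_apply, Sum.map_inr]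
    show σ (Sum.inr (if y = x then 0 else 1)) = _
    simp only [if_neg (Ne.symm hxy)]
    simp [σ]
  have hmem : ∀ z : V, z ∉ W → z = x ∨ z = y := by
    intro z hz
    rw [← Set.mem_compl_iff, hC] at hz
    simpa using hz
  refine ⟨⟨g, ?_⟩⟩
  intro a b
  by_cases ha : a ∈ W <;> by_cases hb : b ∈ W
  · rw [hgW a ha, hgW b hb]
    simp only [graphJoin_adj_inr_inr, graphSum_adj_inr_inr, top_adj, ne_eq]
    constructor
    · intro hne
      exact hclq a ha b hb (fun e => hne (congrArg eW (Subtype.ext e)))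
    · intro hA e
      exact hA.ne (congrArg Subtype.val (eW.injective e))
  · rcases hmem b hb with rfl | rfl
    · rw [hgW a ha, hgx]
      exact iff_of_true (graphJoin_adj_inr_inl _ _ _ _) (hadjx a ha)
    · rw [hgW a ha, hgy]
      exact iff_of_false (by simp) (hnadjy a ha)
  · rcases hmem a ha with rfl | rfl
    · rw [hgW b hb, hgx]
      exact iff_of_true (graphJoin_adj_inl_inr _ _ _ _) ((hadjx b hb).symm)
    · rw [hgW b hb, hgy]
      exact iff_of_false (by simp) (fun h => hnadjy b hb h.symm)
  · rcases hmem a ha with rfl | rfl <;> rcases hmem b hb with rfl | rfl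
    · rw [hgx]
      exact iff_of_false (by simp) (G.loopless.irrefl _)
    · rw [hgx, hgy]
      exact iff_of_true (graphJoin_adj_inl_inr _ _ _ _) hAxy
    · rw [hgx, hgy]
      exact iff_of_true (graphJoin_adj_inr_inl _ _ _ _) hAxy.symm
    · rw [hgy]
      exact iff_of_false (by simp) (G.loopless.irrefl _)

end ForwardCaseB
section MoreHelpers
variable {V : Type*}

lemma twinClass_mem_self (G : SimpleGraph V) (u : V) : u ∈ twinClass G u := isTwin_refl G u

lemma twinClass_pairwise {G : SimpleGraph V} {u w w' : V}
    (hw : w ∈ twinClass G u) (hw' : w' ∈ twinClass G u) : IsTwin G w w' :=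
  isTwin_trans (isTwin_symm hw) hw'

lemma twinClass_const {G : SimpleGraph V} {u w : V} (hw : w ∈ twinClass G u)
    {z : V} (hz : z ∉ twinClass G u) : G.Adj w z ↔ G.Adj u z :=
  (isTwin_iff' _ _ _).mp (twinClass_pairwise hw (twinClass_mem_self G u)) z
    (fun e => hz (e ▸ hw)) (fun e => hz (e ▸ twinClass_mem_self G u))

lemma twinClass_dich (G : SimpleGraph V) (u : V) :
    (∀ w ∈ twinClass G u, ∀ w' ∈ twinClass G u, w ≠ w' → G.Adj w w') ∨
    (∀ w ∈ twinClass G u, ∀ w' ∈ twinClass G u, ¬ G.Adj w w') := by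
  by_cases hE : ∃ w ∈ twinClass G u, ∃ w' ∈ twinClass G u, G.Adj w w'
  · left
    obtain ⟨w, hw, w', hw', hA⟩ := hE
    have h1 : ∀ b ∈ twinClass G u, b ≠ w → G.Adj w b := by
      intro b hb hbw
      rcases eq_or_ne b w' with rfl | hbw'
      · exact hA
      · have := (isTwin_iff' _ _ _).mp (twinClass_pairwise hw' hb) w hA.ne hbw.symm
        exact (this.mp hA.symm).symm
    intro a ha b hb hab
    rcases eq_or_ne a w with rfl | haw
    · exact h1 b hb hab.symm
    · rcases eq_or_ne b w with rfl | hbw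
      · exact (h1 a ha haw).symm
      · have := (isTwin_iff' _ _ _).mp (twinClass_pairwise hw ha) b hbw hab.symm
        exact this.mp (h1 b hb hbw)
  · right
    push_neg at hE
    exact hE

lemma mem_of_walk_closed {G : SimpleGraph V} {W : Set V}
    (hcl : ∀ a ∈ W, ∀ b, G.Adj a b → b ∈ W) :
    ∀ {a b : V}, G.Walk a b → a ∈ W → b ∈ W := by
  intro a b p
  induction p with
  | nil => exact id
  | cons h _ ih => exact fun ha => ih (hcl _ ha _ h)

lemma case_single [Fintype V] {G : SimpleGraph V} (hG : G.Connected) {u x y : V} {m : ℕ}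
    (hWm : (twinClass G u).ncard = m) (hxy : x ≠ y) (hC : (twinClass G u)ᶜ = {x, y})
    (hpx : G.Adj u x) (hpy : ¬ G.Adj u y) :
    Nonempty (G ≃g graphJoin (⊤ : SimpleGraph (Fin 1))
      (graphSum (⊤ : SimpleGraph (Fin 1)) (⊤ : SimpleGraph (Fin m)))) := by
  set W := twinClass G u with hWdef
  have huW : u ∈ W := twinClass_mem_self G u
  have hxW : x ∉ W := by
    rw [← Set.mem_compl_iff, hC]; simp
  have hyW : y ∉ W := by
    rw [← Set.mem_compl_iff, hC]; simp
  have hmem : ∀ z : V, z ∉ W → z = x ∨ z = y := by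
    intro z hz
    rw [← Set.mem_compl_iff, hC] at hz
    simpa using hz
  -- every neighbor of y equals x
  have hyadj : ∀ z, G.Adj y z → z = x := by
    intro z hz
    by_cases hzW : z ∈ W
    · exact absurd ((twinClass_const hzW hyW).mp hz.symm) hpy
    · rcases hmem z hzW with rfl | rfl
      · rfl
      · exact absurd hz (G.loopless.irrefl _)
  have hAxy : G.Adj x y := by
    by_contra hnxy
    have hclosed : ∀ a ∈ ({y} : Set V), ∀ b, G.Adj a b → b ∈ ({y} : Set V) := by
      intro a ha b hb
      rw [Set.mem_singleton_iff] at ha; subst ha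
      have hbx : b = x := hyadj b hb
      subst hbx
      exact absurd hb.symm hnxy
    have := mem_of_walk_closed hclosed (hG.preconnected y u).some rfl
    rw [Set.mem_singleton_iff] at this
    exact hyW (this ▸ huW)
  rcases twinClass_dich G u with hclq | hind
  · refine caseB G W m hWm x y hxy hC hclq ?_ ?_ hAxy
    · exact fun w hw => (twinClass_const hw hxW).mpr hpx
    · exact fun w hw h => hpy ((twinClass_const hw hyW).mp h)
  · exfalso
    apply hyW
    show IsTwin G u y
    rw [isTwin_iff']
    intro z hzu hzy
    by_cases hzW : z ∈ W
    · refine iff_of_false (fun h => hind u huW z hzW h) (fun h => ?_)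
      have := hyadj z h
      exact hxW (this ▸ hzW)
    · rcases hmem z hzW with rfl | rfl
      · exact iff_of_true hpx hAxy.symm
      · exact absurd rfl hzy

end MoreHelpers

/-- For a connected graph `G` of order `n ≥ 4`: `τ(G) = n - 2` iff `G` is
isomorphic to `K_{n-2} ∨ K̄_2`, `K_1 ∨ (K_1 + K_{n-2})`, `K_{2,n-2}`, or
`K̄_{n-2} ∨ K_2`. -/
theorem twinNumber_eq_order_sub_two_iff {V : Type*} [Fintype V]
    (G : SimpleGraph V) (hG : G.Connected) (n : ℕ) (hn : Fintype.card V = n)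
    (h4 : 4 ≤ n) :
    twinNumber G = n - 2 ↔
      (Nonempty (G ≃g graphJoin (⊤ : SimpleGraph (Fin (n - 2))) (⊥ : SimpleGraph (Fin 2))) ∨
       Nonempty (G ≃g graphJoin (⊤ : SimpleGraph (Fin 1))
          (graphSum (⊤ : SimpleGraph (Fin 1)) (⊤ : SimpleGraph (Fin (n - 2))))) ∨
       Nonempty (G ≃g completeBipartiteGraph (Fin 2) (Fin (n - 2))) ∨
       Nonempty (G ≃g graphJoin (⊥ : SimpleGraph (Fin (n - 2))) (⊤ : SimpleGraph (Fin 2)))) := by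
  constructor
  · intro hτ
    haveI : Nonempty V := Fintype.card_pos_iff.mp (by omega)
    obtain ⟨u, hu⟩ := exists_twinClass_ncard_eq G
    rw [hτ] at hu
    set W := twinClass G u with hWdef
    have huW : u ∈ W := twinClass_mem_self G u
    have hCc : (Wᶜ).ncard = 2 := by
      have h := Set.ncard_add_ncard_compl W
      rw [Nat.card_eq_fintype_card, hn] at h
      omega
    obtain ⟨x, y, hxy, hC⟩ := Set.ncard_eq_two.mp hCc
    have hxW : x ∉ W := by rw [← Set.mem_compl_iff, hC]; simp
    have hyW : y ∉ W := by rw [← Set.mem_compl_iff, hC]; simp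
    have hmem : ∀ z : V, z ∉ W → z = x ∨ z = y := by
      intro z hz; rw [← Set.mem_compl_iff, hC] at hz; simpa using hz
    by_cases hpx : G.Adj u x <;> by_cases hpy : G.Adj u y
    · -- both adjacent
      have hadjW : ∀ w ∈ W, ∀ z, z ∉ W → G.Adj w z := by
        intro w hw z hz
        rcases hmem z hz with rfl | rfl
        · exact (twinClass_const hw hz).mpr hpx
        · exact (twinClass_const hw hz).mpr hpy
      rcases twinClass_dich G u with hclq | hind
      · by_cases hxyA : G.Adj x y
        · exfalso
          apply hxW
          show IsTwin G u x
          rw [isTwin_iff']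
          intro z hzu hzx
          by_cases hzW : z ∈ W
          · exact iff_of_true (hclq u huW z hzW hzu.symm)
              (((twinClass_const hzW hxW).mpr hpx).symm)
          · rcases hmem z hzW with rfl | rfl
            · exact absurd rfl hzx
            · exact iff_of_true hpy hxyA
        · refine Or.inl (caseA G W (n - 2) hu hCc hclq hadjW ?_)
          intro z hz z' hz'
          rcases hmem z hz with rfl | rfl <;> rcases hmem z' hz' with rfl | rfl
          · exact G.loopless.irrefl _
          · exact hxyA
          · exact fun h => hxyA h.symm
          · exact G.loopless.irrefl _
      · by_cases hxyA : G.Adj x y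
        · refine Or.inr (Or.inr (Or.inr (caseD G W (n - 2) hu hCc hind hadjW ?_)))
          intro z hz z' hz' hne
          rcases hmem z hz with rfl | rfl <;> rcases hmem z' hz' with rfl | rfl
          · exact absurd rfl hne
          · exact hxyA
          · exact hxyA.symm
          · exact absurd rfl hne
        · refine Or.inr (Or.inr (Or.inl (caseC G W (n - 2) hu hCc hind hadjW ?_)))
          intro z hz z' hz'
          rcases hmem z hz with rfl | rfl <;> rcases hmem z' hz' with rfl | rfl
          · exact G.loopless.irrefl _
          · exact hxyA
          · exact fun h => hxyA h.symm
          · exact G.loopless.irrefl _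
    · exact Or.inr (Or.inl (case_single hG hu hxy hC hpx hpy))
    · refine Or.inr (Or.inl (case_single hG hu hxy.symm ?_ hpy hpx))
      rw [hC]; exact Set.pair_comm x y
    · exfalso
      have hclosed : ∀ a ∈ W, ∀ b, G.Adj a b → b ∈ W := by
        intro a ha b hb
        by_contra hbW
        rcases hmem b hbW with rfl | rfl
        · exact hpx ((twinClass_const ha hbW).mp hb)
        · exact hpy ((twinClass_const ha hbW).mp hb)
      have := mem_of_walk_closed hclosed (hG.preconnected u x).some huW
      exact hxW this
  · rintro (he | he | he | he) <;> obtain ⟨e⟩ := he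
    · rw [twinNumber_congr e]; exact tnA (n - 2) (by omega)
    · rw [twinNumber_congr e]; exact tnB (n - 2) (by omega)
    · rw [twinNumber_congr e]; exact tnC (n - 2) (by omega)
    · rw [twinNumber_congr e]; exact tnD (n - 2) (by omega)
end
end
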